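/- arXiv:2507.12697 — 3 statements merged into one kernel-verified Lean document; each statement's English description precedes it below -/
import Mathlib

section
/- Let u be a vertex of a simple graph G having exactly two neighbors v and w. Then the edge set of G∧uv − {u,v} equals E(G − {u,v,w}) ∪ { xw : x ∈ (N_G(v) △ N_G(w)) ∖ {v,w} }. -/
open SimpleGraph

universe u v

/-! ### Basic graph operations: flips, local complementation, pivoting, pivot-minors -/

/-- Flip the adjacency of `G` exactly at the pairs of distinct vertices where the
(symmetrized) predicate `p` holds. -/
def sdFlip {V : Type u} (G : SimpleGraph V) (p : V → V → Prop) : SimpleGraph V where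
  Adj x y := x ≠ y ∧ Xor' (G.Adj x y) (p x y ∨ p y x)
  symm := by
    constructor
    intro x y h
    refine ⟨h.1.symm, ?_⟩
    have h2 := h.2
    rwa [G.adj_comm x y, or_comm] at h2
  loopless := by
    constructor
    intro x h
    exact h.1 rfl

/-- Local complementation `G * v`: complement the adjacency inside the neighborhood of `v`. -/
def localComp {V : Type u} (G : SimpleGraph V) (v : V) : SimpleGraph V :=
  sdFlip G (fun x y => G.Adj v x ∧ G.Adj v y)

/-- Pivoting an edge `uv`: `G ∧ uv = G * u * v * u`. -/
def pivot {V : Type u} (G : SimpleGraph V) (u v : V) : SimpleGraph V :=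
  localComp (localComp (localComp G u) v) u

/-- Applying a sequence of pivots. -/
def pivotSeq {V : Type u} (G : SimpleGraph V) : List (V × V) → SimpleGraph V
  | [] => G
  | e :: l => pivotSeq (pivot G e.1 e.2) l

/-- Each pivot in the sequence is performed on an edge of the current graph. -/
def ValidPivots {V : Type u} (G : SimpleGraph V) : List (V × V) → Prop
  | [] => True
  | e :: l => G.Adj e.1 e.2 ∧ ValidPivots (pivot G e.1 e.2) l

/-- `H` is a pivot-minor of `G`: `H` is isomorphic to a graph obtained from `G` by a sequence of
pivotings (on edges of the current graph) and vertex deletions. -/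
def IsPivotMinorOf {W : Type v} {V : Type u} (H : SimpleGraph W) (G : SimpleGraph V) : Prop :=
  ∃ (l : List (V × V)) (S : Set V), ValidPivots G l ∧
    Nonempty (H ≃g (pivotSeq G l).induce S)

/-! ### The half-graph join `G △ H` -/

/-- `G △ H`: the disjoint union of `G` and `H` together with the half graph joining them:
the `i`-th vertex of `G` is adjacent to the `j`-th vertex of `H` iff `i ≥ j`. -/
def halfJoin {n : ℕ} (G H : SimpleGraph (Fin n)) : SimpleGraph (Fin n ⊕ Fin n) where
  Adj x y :=
    match x, y with
    | Sum.inl i, Sum.inl i' => G.Adj i i'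
    | Sum.inr j, Sum.inr j' => H.Adj j j'
    | Sum.inl i, Sum.inr j => j ≤ i
    | Sum.inr j, Sum.inl i => j ≤ i
  symm := by
    constructor
    rintro (i | i) (j | j) h
    · exact G.adj_symm h
    · exact h
    · exact h
    · exact H.adj_symm h
  loopless := by
    constructor
    rintro (i | i) h
    · exact G.irrefl h
    · exact H.irrefl h

/-! ### Flips by a set, by a pair of sets, and by a collection of sets -/

/-- The `X`-flip of `G`: complement the adjacency inside `X`. (The `∅`-flip is `G` itself.) -/
def setFlip {V : Type u} (G : SimpleGraph V) (X : Set V) : SimpleGraph V :=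
  sdFlip G (fun x y => x ∈ X ∧ y ∈ X)

/-- `G * (X, Y)`: complement the adjacency between `X` and `Y`. -/
def pairFlip {V : Type u} (G : SimpleGraph V) (X Y : Set V) : SimpleGraph V :=
  sdFlip G (fun x y => x ∈ X ∧ y ∈ Y)

open Classical in
/-- The member of the collection `P` containing `v`, if any, and `{v}` otherwise. -/
noncomputable def blockOf {V : Type u} (P : Set (Set V)) (v : V) : Set V :=
  if h : ∃ X ∈ P, v ∈ X then h.choose else {v}

/-- A subset `F ⊆ P²` is symmetric if `(X,X') ∈ F` implies `(X',X) ∈ F`. -/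
def SymmRelSet {α : Type u} (F : Set (α × α)) : Prop :=
  ∀ a b : α, (a, b) ∈ F → (b, a) ∈ F

/-- The `(P,F)`-flip `H ⊕ (P,F)` of `H`: distinct vertices `u,v` are adjacent iff
`H.Adj u v` XOR `(P(u), P(v)) ∈ F`. -/
noncomputable def collFlip {V : Type u} (H : SimpleGraph V) (P : Set (Set V))
    (F : Set (Set V × Set V)) : SimpleGraph V :=
  sdFlip H (fun x y => (blockOf P x, blockOf P y) ∈ F)

/-- `P` is a collection of pairwise disjoint non-empty subsets. -/
def IsDisjNonemptyColl {V : Type u} (P : Set (Set V)) : Prop :=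
  (∀ X ∈ P, X.Nonempty) ∧ P.PairwiseDisjoint id

/-- `Q` is a coarsening of `P`: a collection of disjoint non-empty sets,
each a union of members of `P`. -/
def IsCoarsening {α : Type u} (Q P : Set (Set α)) : Prop :=
  IsDisjNonemptyColl Q ∧ ∀ X ∈ Q, ∃ C ⊆ P, X = ⋃₀ C

/-! ### The graph `mPₙ` and flipped `mPₙ`'s -/

/-- `mPₙ`: the disjoint union of `m` copies of the path `Pₙ`, with vertex set `[m] × [n]`. -/
def pathsGraph (m n : ℕ) : SimpleGraph (Fin m × Fin n) where
  Adj x y := x.1 = y.1 ∧ (pathGraph n).Adj x.2 y.2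
  symm := by
    constructor
    rintro ⟨i, a⟩ ⟨j, b⟩ ⟨h1, h2⟩
    exact ⟨h1.symm, (pathGraph n).adj_symm h2⟩
  loopless := by
    constructor
    rintro ⟨i, a⟩ ⟨_, h⟩
    exact (pathGraph n).irrefl h

/-- The `j`-th column of `mPₙ`. -/
def column (m n : ℕ) (j : Fin n) : Set (Fin m × Fin n) := {p | p.2 = j}

/-- The column set of `mPₙ`. -/
def columnSet (m n : ℕ) : Set (Set (Fin m × Fin n)) := Set.range (column m n)

/-- A flipped `mPₙ`: a `P`-flip of `mPₙ` where `P` is a coarsening of the column set. -/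
def IsFlippedPaths (m n : ℕ) (G : SimpleGraph (Fin m × Fin n)) : Prop :=
  ∃ (P : Set (Set (Fin m × Fin n))) (F : Set (Set (Fin m × Fin n) × Set (Fin m × Fin n))),
    IsCoarsening P (columnSet m n) ∧ F ⊆ P ×ˢ P ∧ SymmRelSet F ∧
    G = collFlip (pathsGraph m n) P F

/-- A `k`-flipped `mPₙ`: a flipped `mPₙ` with `|P| ≤ k`. -/
def IsKFlippedPaths (k m n : ℕ) (G : SimpleGraph (Fin m × Fin n)) : Prop :=
  ∃ (P : Set (Set (Fin m × Fin n))) (F : Set (Set (Fin m × Fin n) × Set (Fin m × Fin n))),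
    IsCoarsening P (columnSet m n) ∧ P.ncard ≤ k ∧ F ⊆ P ×ˢ P ∧ SymmRelSet F ∧
    G = collFlip (pathsGraph m n) P F

/-! ### Cut-rank and rank-depth -/

open Classical in
/-- The cut-rank `ρ_G(S)`: the rank over GF(2) of the `S × (V ∖ S)` submatrix of the
adjacency matrix of `G`. -/
noncomputable def cutRank {V : Type u} [Fintype V] (G : SimpleGraph V) (S : Set V) : ℕ :=
  Matrix.rank (Matrix.of fun (i : S) (j : (Sᶜ : Set V)) =>
    if G.Adj (i : V) (j : V) then (1 : ZMod 2) else 0)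

/-- The rank-depth of `G`: the least `k` such that `G` has a decomposition `(T, σ)` into a
tree `T` with the vertices of `G` identified with the leaves of `T` via `σ`, of width at
most `k` and radius at most `k`.  The width condition is expressed as: for every non-leaf
node `v` of `T` and every set `S ⊆ V(G)` that is a union of parts of the partition of `V(G)`
induced by the components of `T - v`, we have `ρ_G(S) ≤ k`. -/
noncomputable def rankDepth {V : Type u} [Fintype V] (G : SimpleGraph V) : ℕ :=
  sInf {k : ℕ |
    ∃ (N : ℕ) (T : SimpleGraph (Fin N))
      (σ : V ≃ {x : Fin N // (T.neighborSet x).ncard ≤ 1}),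
      T.IsTree ∧
      (∃ c : Fin N, ∀ x : Fin N, T.dist c x ≤ k) ∧
      (∀ x : Fin N, 1 < (T.neighborSet x).ncard →
        ∀ S : Set V,
          (∀ a b : V, a ∈ S →
            (∃ w : T.Walk ((σ a : {x : Fin N // (T.neighborSet x).ncard ≤ 1}) : Fin N)
                ((σ b : {x : Fin N // (T.neighborSet x).ncard ≤ 1}) : Fin N),
              x ∉ w.support) → b ∈ S) →
          cutRank G S ≤ k)}

/-! ### Restrictions of collections, and the sets `C_F`, `L_F`, `R_F`, `D_F` -/

/-- The restriction `P|_{S}` of a collection of subsets of `V` to a subset `S`. -/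
def restrictColl {V : Type u} (P : Set (Set V)) (S : Set V) : Set (Set S) :=
  {Y | ∃ X ∈ P, (Subtype.val ⁻¹' X : Set S).Nonempty ∧ Y = (Subtype.val ⁻¹' X : Set S)}

/-- The restriction `F|_{S}` of a collection of pairs of subsets of `V` to a subset `S`. -/
def restrictF {V : Type u} (F : Set (Set V × Set V)) (S : Set V) : Set (Set S × Set S) :=
  {q | ∃ p ∈ F, (Subtype.val ⁻¹' p.1 : Set S).Nonempty ∧ (Subtype.val ⁻¹' p.2 : Set S).Nonempty ∧
      q = ((Subtype.val ⁻¹' p.1 : Set S), (Subtype.val ⁻¹' p.2 : Set S))}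

/-- `C_F(X,X') = {Y ∈ P : (X,Y) ∈ F and (X',Y) ∈ F}`. -/
def CF {V : Type u} (P : Set (Set V)) (F : Set (Set V × Set V)) (X X' : Set V) : Set (Set V) :=
  {Y ∈ P | (X, Y) ∈ F ∧ (X', Y) ∈ F}

/-- `L_F(X,X') = {Y ∈ P : (X,Y) ∈ F and (X',Y) ∉ F}`. -/
def LF {V : Type u} (P : Set (Set V)) (F : Set (Set V × Set V)) (X X' : Set V) : Set (Set V) :=
  {Y ∈ P | (X, Y) ∈ F ∧ (X', Y) ∉ F}

/-- `R_F(X,X') = {Y ∈ P : (X,Y) ∉ F and (X',Y) ∈ F}`. -/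
def RF {V : Type u} (P : Set (Set V)) (F : Set (Set V × Set V)) (X X' : Set V) : Set (Set V) :=
  {Y ∈ P | (X, Y) ∉ F ∧ (X', Y) ∈ F}

/-- `D_F(X,X') = (C×L) ∪ (C×R) ∪ (L×R) ∪ (L×C) ∪ (R×C) ∪ (R×L)`. -/
def DF {V : Type u} (P : Set (Set V)) (F : Set (Set V × Set V)) (X X' : Set V) :
    Set (Set V × Set V) :=
  (CF P F X X' ×ˢ LF P F X X') ∪ (CF P F X X' ×ˢ RF P F X X') ∪ (LF P F X X' ×ˢ RF P F X X') ∪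
  (LF P F X X' ×ˢ CF P F X X') ∪ (RF P F X X' ×ˢ CF P F X X') ∪ (RF P F X X' ×ˢ LF P F X X')

/-- The set of `t` consecutive vertices of the path `P_s` starting at position `i` (0-indexed). -/
def consec (s i t : ℕ) : Set (Fin s) := {x | i ≤ (x : ℕ) ∧ (x : ℕ) < i + t}

/-- An `(s,t)`-path: a graph isomorphic to the `X`-flip of `P_s` for a set `X` of `t`
consecutive vertices of `P_s`. -/
def IsSTPath (s t : ℕ) {W : Type v} (G : SimpleGraph W) : Prop :=
  ∃ i : ℕ, i + t ≤ s ∧ Nonempty (G ≃g setFlip (pathGraph s) (consec s i t))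

/-! ## Statement 2 -/
theorem stmt2 {V : Type} (G : SimpleGraph V) (u v w : V) (hvw : v ≠ w)
    (hN : G.neighborSet u = {v, w}) :
    ∀ x y : V, x ∉ ({u, v} : Set V) → y ∉ ({u, v} : Set V) →
      ((pivot G u v).Adj x y ↔
        ((G.Adj x y ∧ x ≠ w ∧ y ≠ w) ∨
          (x = w ∧ y ∈ (symmDiff (G.neighborSet v) (G.neighborSet w)) \ {v, w}) ∨
          (y = w ∧ x ∈ (symmDiff (G.neighborSet v) (G.neighborSet w)) \ {v, w}))) := by

  have hAu : ∀ z : V, G.Adj u z ↔ z = v ∨ z = w := by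
    intro z
    rw [← SimpleGraph.mem_neighborSet, hN]
    simp [Set.mem_insert_iff]
  have huv : G.Adj u v := (hAu v).2 (Or.inl rfl)
  have huw : G.Adj u w := (hAu w).2 (Or.inr rfl)
  have huu : ¬ G.Adj u u := G.irrefl
  intro x y hx hy
  simp only [Set.mem_insert_iff, Set.mem_singleton_iff, not_or] at hx hy
  obtain ⟨hxu, hxv⟩ := hx
  obtain ⟨hyu, hyv⟩ := hy
  have hloc : ∀ (H : SimpleGraph V) (c a b : V), (localComp H c).Adj a b ↔
      a ≠ b ∧ Xor' (H.Adj a b) (H.Adj c a ∧ H.Adj c b) := by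
    intro H c a b
    show (a ≠ b ∧ Xor' (H.Adj a b) ((H.Adj c a ∧ H.Adj c b) ∨ (H.Adj c b ∧ H.Adj c a))) ↔ _
    unfold Xor' Xor
    tauto
  have hxorf : ∀ P : Prop, Xor' P False ↔ P := by
    intro P; unfold Xor' Xor; tauto
  have hxort : ∀ P : Prop, Xor' P True ↔ ¬ P := by
    intro P; unfold Xor' Xor; tauto
  have hcancel : ∀ P Q : Prop, Xor' P (Xor' Q P) ↔ Q := by
    intro P Q; unfold Xor' Xor; tauto
  obtain ⟨G1, hG1⟩ : ∃ H : SimpleGraph V, H = localComp G u := ⟨_, rfl⟩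
  obtain ⟨G2, hG2⟩ : ∃ H : SimpleGraph V, H = localComp G1 v := ⟨_, rfl⟩
  have hpiv : pivot G u v = localComp G2 u := by rw [hG2, hG1]; rfl
  have hux : G.Adj u x ↔ x = w := by rw [hAu]; simp [hxv]
  have huy : G.Adj u y ↔ y = w := by rw [hAu]; simp [hyv]
  -- G1 facts
  have e1 : ∀ z : V, z ≠ u → (G1.Adj u z ↔ G.Adj u z) := by
    intro z hz
    rw [hG1, hloc]
    simp only [iff_false_intro huu, false_and, hxorf, iff_true_intro (Ne.symm hz), true_and]
  have e2 : G1.Adj v u := by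
    rw [hG1, hloc]
    unfold Xor'
    have hvu : v ≠ u := fun h => huu (h ▸ huv)
    exact ⟨hvu, Or.inl ⟨huv.symm, fun h => huu h.2⟩⟩
  have e3 : ∀ z : V, (G1.Adj v z ↔ v ≠ z ∧ Xor' (G.Adj v z) (G.Adj u z)) := by
    intro z
    rw [hG1, hloc]
    simp only [iff_true_intro huv, true_and]
  have e4 : G1.Adj x y ↔ G.Adj x y := by
    rw [hG1, hloc]
    unfold Xor'
    constructor
    · rintro ⟨hne, (⟨h, _⟩ | ⟨⟨h1, h2⟩, _⟩)⟩
      · exact h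
      · exact absurd (hne) (by rw [hux.1 h1, huy.1 h2]; exact fun h => h rfl)
    · intro h
      exact ⟨h.ne, Or.inl ⟨h, fun hc => h.ne (by rw [hux.1 hc.1, huy.1 hc.2])⟩⟩
  -- G2 facts
  have f1 : ∀ z : V, z ≠ u → (G2.Adj u z ↔
      Xor' (G.Adj u z) (v ≠ z ∧ Xor' (G.Adj v z) (G.Adj u z))) := by
    intro z hzu
    rw [hG2, hloc, e1 z hzu, e3 z]
    simp only [iff_true_intro e2, true_and, iff_true_intro (Ne.symm hzu)]
  have f1x : G2.Adj u x ↔ G.Adj v x := by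
    rw [f1 x hxu, hux]
    simp only [iff_true_intro (Ne.symm hxv), true_and]
    exact hcancel _ _
  have f1y : G2.Adj u y ↔ G.Adj v y := by
    rw [f1 y hyu, huy]
    simp only [iff_true_intro (Ne.symm hyv), true_and]
    exact hcancel _ _
  have f2 : G2.Adj x y ↔ x ≠ y ∧ Xor' (G.Adj x y)
      ((Xor' (G.Adj v x) (x = w)) ∧ (Xor' (G.Adj v y) (y = w))) := by
    rw [hG2, hloc, e4, e3 x, e3 y, hux, huy]
    simp only [iff_true_intro (Ne.symm hxv), iff_true_intro (Ne.symm hyv), true_and]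
  -- final
  have hfin : (pivot G u v).Adj x y ↔ x ≠ y ∧ Xor' (G2.Adj x y) (G.Adj v x ∧ G.Adj v y) := by
    rw [hpiv, hloc, f1x, f1y]
  rw [hfin, f2]
  simp only [symmDiff_def, Set.sup_eq_union, Set.mem_diff, Set.mem_union, Set.mem_insert_iff,
    Set.mem_singleton_iff, Set.mem_setOf_eq, SimpleGraph.mem_neighborSet, not_or]
  by_cases hxw : x = w <;> by_cases hyw : y = w
  · subst hxw
    subst hyw
    simp [Xor']
  · subst hxw
    have hxy : x ≠ y := Ne.symm hyw
    simp only [eq_self_iff_true, iff_false_intro hyw, iff_false_intro hyv,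
      iff_true_intro hxy, hxorf, hxort, true_and, and_true, not_false_iff,
      false_and, and_false, or_false, false_or, not_true, ne_eq, not_not]
    unfold Xor' Xor
    clear * -
    tauto
  · subst hyw
    have hxy : x ≠ y := hxw
    have hcomm : G.Adj y x ↔ G.Adj x y := G.adj_comm y x
    simp only [eq_self_iff_true, iff_false_intro hxw, iff_false_intro hxv,
      iff_true_intro hxy, hxorf, hxort, hcomm, true_and, and_true, not_false_iff,
      false_and, and_false, or_false, false_or, not_true, ne_eq, not_not]
    unfold Xor' Xor
    clear * -
    tauto
  · simp only [iff_false_intro hxw, iff_false_intro hyw, hxorf, true_and, and_true,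
      not_false_iff, false_and, and_false, or_false, false_or, ne_eq]
    unfold Xor' Xor
    have hadj : G.Adj x y → x ≠ y := G.ne_of_adj
    clear * - hadj
    tauto
end

section
/- Let H be a graph, P a collection of pairwise disjoint non-empty subsets of V(H), and F a symmetric subset of P². Suppose the (P,F)-flip G of H has an edge uv with u ∈ X, v ∈ X' for distinct X, X' ∈ P. Then for every subgraph H' of H whose vertex set is disjoint from N_H[{u,v}], the induced subgraph of G∧uv on V(H') equals H'⊕(P|_{H'}, (F △ D_F(X,X'))|_{H'}). -/
open SimpleGraph

universe u v

@[simp] lemma sdFlip_adj {V : Type u} (G : SimpleGraph V) (p : V → V → Prop) (a b : V) :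
    (sdFlip G p).Adj a b ↔ a ≠ b ∧ Xor' (G.Adj a b) (p a b ∨ p b a) := Iff.rfl

lemma blockOf_mem_self {V : Type u} (P : Set (Set V)) (v : V) : v ∈ blockOf P v := by
  unfold blockOf
  split
  · next h => exact h.choose_spec.2
  · exact rfl

lemma blockOf_eq {V : Type u} {P : Set (Set V)} (hP : P.PairwiseDisjoint id)
    {X : Set V} (hX : X ∈ P) {v : V} (hv : v ∈ X) : blockOf P v = X := by
  unfold blockOf
  split
  · next h =>
    have h1 := h.choose_spec
    by_contra hne
    exact Set.disjoint_left.mp (hP h1.1 hX hne) h1.2 hv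
  · next h => exact absurd ⟨X, hX, hv⟩ h

lemma blockOf_eq_singleton {V : Type u} {P : Set (Set V)} {v : V}
    (h : ¬ ∃ X ∈ P, v ∈ X) : blockOf P v = {v} := by
  unfold blockOf
  exact dif_neg h

lemma blockOf_restrict_eq {V : Type} {P : Set (Set V)} (hP : P.PairwiseDisjoint id)
    {S : Set V} {a : S} {Y : Set V} (hY : Y ∈ P) (ha : (a : V) ∈ Y) :
    blockOf (restrictColl P S) a = (Subtype.val ⁻¹' Y : Set S) := by
  have hmem : (Subtype.val ⁻¹' Y : Set S) ∈ restrictColl P S :=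
    ⟨Y, hY, ⟨a, ha⟩, rfl⟩
  have hdisj : (restrictColl P S).PairwiseDisjoint id := by
    intro A hA B hB hAB
    obtain ⟨XA, hXA, -, rfl⟩ := hA
    obtain ⟨XB, hXB, -, rfl⟩ := hB
    have : XA ≠ XB := by rintro rfl; exact hAB rfl
    have := hP hXA hXB this
    exact Set.disjoint_left.mpr fun {c} hc1 hc2 =>
      Set.disjoint_left.mp this hc1 hc2
  exact blockOf_eq hdisj hmem ha

lemma mem_restrictF_iff {V : Type} {P : Set (Set V)} (hP : P.PairwiseDisjoint id)
    {F' : Set (Set V × Set V)} (hF'P : F' ⊆ P ×ˢ P) (S : Set V) (a b : S) :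
    (blockOf (restrictColl P S) a, blockOf (restrictColl P S) b) ∈ restrictF F' S ↔
      (blockOf P (a : V), blockOf P (b : V)) ∈ F' := by
  constructor
  · rintro ⟨⟨Y, Y'⟩, hmem, hne1, hne2, heq⟩
    have hYP : Y ∈ P := (hF'P hmem).1
    have hY'P : Y' ∈ P := (hF'P hmem).2
    have h1 : blockOf (restrictColl P S) a = (Subtype.val ⁻¹' Y : Set S) :=
      congrArg Prod.fst heq
    have h2 : blockOf (restrictColl P S) b = (Subtype.val ⁻¹' Y' : Set S) :=
      congrArg Prod.snd heq
    have haY : (a : V) ∈ Y := by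
      have := blockOf_mem_self (restrictColl P S) a
      rw [h1] at this; exact this
    have hbY : (b : V) ∈ Y' := by
      have := blockOf_mem_self (restrictColl P S) b
      rw [h2] at this; exact this
    rw [blockOf_eq hP hYP haY, blockOf_eq hP hY'P hbY]
    exact hmem
  · intro h
    have hBa : blockOf P (a : V) ∈ P := (hF'P h).1
    have hBb : blockOf P (b : V) ∈ P := (hF'P h).2
    refine ⟨(blockOf P (a : V), blockOf P (b : V)), h,
      ⟨a, blockOf_mem_self P (a : V)⟩, ⟨b, blockOf_mem_self P (b : V)⟩, ?_⟩
    rw [blockOf_restrict_eq hP hBa (blockOf_mem_self P (a : V)),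
      blockOf_restrict_eq hP hBb (blockOf_mem_self P (b : V))]

set_option maxHeartbeats 2000000 in
lemma mem_DF_iff {V : Type} {P : Set (Set V)} {F : Set (Set V × Set V)} (hFP : F ⊆ P ×ˢ P)
    (X X' A B : Set V) :
    (A, B) ∈ DF P F X X' ↔
      Xor' ((X, A) ∈ F ∧ (X', B) ∈ F) ((X', A) ∈ F ∧ (X, B) ∈ F) := by
  have hA : (X, A) ∈ F → A ∈ P := fun h => (hFP h).2
  have hA' : (X', A) ∈ F → A ∈ P := fun h => (hFP h).2
  have hB : (X, B) ∈ F → B ∈ P := fun h => (hFP h).2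
  have hB' : (X', B) ∈ F → B ∈ P := fun h => (hFP h).2
  simp only [DF, CF, LF, RF, Set.mem_union, Set.mem_prod, Set.mem_sep_iff, Xor']
  by_cases h1 : (X, A) ∈ F <;> by_cases h2 : (X', A) ∈ F <;>
    by_cases h3 : (X, B) ∈ F <;> by_cases h4 : (X', B) ∈ F <;> simp_all

/-! ## Statement 8 -/
set_option maxHeartbeats 4000000 in
theorem stmt8 {V : Type} (H : SimpleGraph V) (P : Set (Set V))
    (hP : IsDisjNonemptyColl P)
    (F : Set (Set V × Set V)) (hFP : F ⊆ P ×ˢ P) (hFsymm : SymmRelSet F)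
    (u x : V) (X X' : Set V) (hX : X ∈ P) (hX' : X' ∈ P) (hXX' : X ≠ X')
    (hu : u ∈ X) (hx : x ∈ X')
    (hadj : (collFlip H P F).Adj u x)
    (S : Set V)
    (hdisj : ∀ z ∈ S, z ∉ insert u (H.neighborSet u) ∪ insert x (H.neighborSet x)) :

    (pivot (collFlip H P F) u x).induce S =
      collFlip (H.induce S) (restrictColl P S) (restrictF (symmDiff F (DF P F X X')) S) := by
  classical
  have hPd := hP.2
  have hS : ∀ z ∈ S, z ≠ u ∧ z ≠ x ∧ ¬H.Adj u z ∧ ¬H.Adj x z := by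
    intro z hz
    have h := hdisj z hz
    simp only [Set.mem_union, Set.mem_insert_iff, mem_neighborSet, not_or] at h
    exact ⟨h.1.1, h.2.1, h.1.2, h.2.2⟩
  have hBu : blockOf P u = X := blockOf_eq hPd hX hu
  have hBx : blockOf P x = X' := blockOf_eq hPd hX' hx
  set G := collFlip H P F with hG
  have hGu : ∀ z ∈ S, (G.Adj u z ↔ (X, blockOf P z) ∈ F) := by
    intro z hz
    obtain ⟨h1, h2, h3, h4⟩ := hS z hz
    show (u ≠ z ∧ Xor' (H.Adj u z)
      (((blockOf P u, blockOf P z) ∈ F) ∨ ((blockOf P z, blockOf P u) ∈ F))) ↔ _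
    rw [hBu]
    constructor
    · rintro ⟨-, (⟨h5, -⟩ | ⟨h5, -⟩)⟩
      · exact absurd h5 h3
      · exact h5.elim id (hFsymm _ _)
    · intro hf
      exact ⟨fun hc => h1 hc.symm, Or.inr ⟨Or.inl hf, h3⟩⟩
  have hGx : ∀ z ∈ S, (G.Adj x z ↔ (X', blockOf P z) ∈ F) := by
    intro z hz
    obtain ⟨h1, h2, h3, h4⟩ := hS z hz
    show (x ≠ z ∧ Xor' (H.Adj x z)
      (((blockOf P x, blockOf P z) ∈ F) ∨ ((blockOf P z, blockOf P x) ∈ F))) ↔ _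
    rw [hBx]
    constructor
    · rintro ⟨-, (⟨h5, -⟩ | ⟨h5, -⟩)⟩
      · exact absurd h5 h4
      · exact h5.elim id (hFsymm _ _)
    · intro hf
      exact ⟨fun hc => h2 hc.symm, Or.inr ⟨Or.inl hf, h4⟩⟩
  have hGab : ∀ z w : V, z ≠ w →
      (G.Adj z w ↔ Xor' (H.Adj z w) ((blockOf P z, blockOf P w) ∈ F)) := by
    intro z w hzw
    show (z ≠ w ∧ Xor' (H.Adj z w)
      (((blockOf P z, blockOf P w) ∈ F) ∨ ((blockOf P w, blockOf P z) ∈ F))) ↔ _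
    constructor
    · rintro ⟨-, (⟨h5, h6⟩ | ⟨h5, h6⟩)⟩
      · exact Or.inl ⟨h5, fun hc => h6 (Or.inl hc)⟩
      · exact Or.inr ⟨h5.elim id (hFsymm _ _), h6⟩
    · rintro (⟨h5, h6⟩ | ⟨h5, h6⟩)
      · exact ⟨hzw, Or.inl ⟨h5, fun hc => h6 (hc.elim id (hFsymm _ _))⟩⟩
      · exact ⟨hzw, Or.inr ⟨Or.inl h5, h6⟩⟩
  have hDP : DF P F X X' ⊆ P ×ˢ P := by
    rintro ⟨A, B⟩ h
    simp only [DF, CF, LF, RF, Set.mem_union, Set.mem_prod, Set.mem_sep_iff] at h ⊢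
    tauto
  have hFDP : symmDiff F (DF P F X X') ⊆ P ×ˢ P := by
    intro p hp
    rcases Set.mem_symmDiff.mp hp with ⟨h, -⟩ | ⟨h, -⟩
    · exact hFP h
    · exact hDP h
  ext ⟨a, ha⟩ ⟨b, hb⟩
  obtain ⟨hau, hax, hHua, hHxa⟩ := hS a ha
  obtain ⟨hbu, hbx, hHub, hHxb⟩ := hS b hb
  have hGua := hGu a ha
  have hGub := hGu b hb
  have hGxa := hGx a ha
  have hGxb := hGx b hb
  have hGau : G.Adj a u ↔ (X, blockOf P a) ∈ F := by rw [G.adj_comm]; exact hGua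
  have hGbu : G.Adj b u ↔ (X, blockOf P b) ∈ F := by rw [G.adj_comm]; exact hGub
  have hGax : G.Adj a x ↔ (X', blockOf P a) ∈ F := by rw [G.adj_comm]; exact hGxa
  have hGbx : G.Adj b x ↔ (X', blockOf P b) ∈ F := by rw [G.adj_comm]; exact hGxb
  have hGux : G.Adj u x := hadj
  have hGxu : G.Adj x u := hadj.symm
  have hux : u ≠ x := hadj.ne
  have hmF : (blockOf (restrictColl P S) ⟨a, ha⟩, blockOf (restrictColl P S) ⟨b, hb⟩) ∈
      restrictF (symmDiff F (DF P F X X')) S ↔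
      (blockOf P a, blockOf P b) ∈ symmDiff F (DF P F X X') :=
    mem_restrictF_iff hPd hFDP S ⟨a, ha⟩ ⟨b, hb⟩
  have hmF' : (blockOf (restrictColl P S) ⟨b, hb⟩, blockOf (restrictColl P S) ⟨a, ha⟩) ∈
      restrictF (symmDiff F (DF P F X X')) S ↔
      (blockOf P b, blockOf P a) ∈ symmDiff F (DF P F X X') :=
    mem_restrictF_iff hPd hFDP S ⟨b, hb⟩ ⟨a, ha⟩
  by_cases hab : a = b
  · subst hab
    exact iff_of_false (SimpleGraph.irrefl _) (SimpleGraph.irrefl _)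
  · have hab' : (⟨a, ha⟩ : S) ≠ ⟨b, hb⟩ := fun hc => hab (congrArg Subtype.val hc)
    have hGAB := hGab a b hab
    have hGBA := hGab b a (Ne.symm hab)
    have hDab := mem_DF_iff hFP X X' (blockOf P a) (blockOf P b)
    have hDba := mem_DF_iff hFP X X' (blockOf P b) (blockOf P a)
    have hFba : (blockOf P b, blockOf P a) ∈ F ↔ (blockOf P a, blockOf P b) ∈ F :=
      ⟨hFsymm _ _, hFsymm _ _⟩
    simp only [induce, comap_adj, Function.Embedding.coe_subtype, pivot, localComp, collFlip,
      sdFlip_adj]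
    simp only [hGua, hGau, hGxa, hGax, hGub, hGbu, hGxb, hGbx, hGAB, hGBA, hGux, hGxu,
      SimpleGraph.irrefl, hmF, hmF', Set.mem_symmDiff, hDab, hDba, hFba, hab, hab', hau, hax,
      hbu, hbx, hux, Ne.symm hau, Ne.symm hax, Ne.symm hbu, Ne.symm hbx, Ne.symm hux,
      hHua, hHxa, hHub, hHxb, ne_eq, not_false_iff, true_and, and_true, iff_true, iff_false,
      not_true, not_false_eq_true, false_and, and_false, false_or, or_false]
    by_cases h1 : (X, blockOf P a) ∈ F <;> by_cases h2 : (X', blockOf P a) ∈ F <;>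
      by_cases h3 : (X, blockOf P b) ∈ F <;> by_cases h4 : (X', blockOf P b) ∈ F <;>
      by_cases h5 : (blockOf P a, blockOf P b) ∈ F <;> by_cases h6 : H.Adj a b <;>
      simp [h1, h2, h3, h4, h5, h6, Xor']
end

section
/- For integers m, n ≥ 1, let P be a coarsening of the column set of (m+4)P_n with |P| = k ≥ 2. Then every P-flip of (m+4)P_n contains a (k−1)-flipped mP_n as a pivot-minor. -/
open SimpleGraph

universe u v

section Aux
variable {V : Type u}

lemma aux_xor_assoc {a b c : Prop} : Xor' (Xor' a b) c ↔ Xor' a (Xor' b c) := by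
  by_cases a <;> by_cases b <;> by_cases c <;> simp_all [Xor']

lemma aux_xor_congr {a a' b b' : Prop} (h1 : a ↔ a') (h2 : b ↔ b') :
    Xor' a b ↔ Xor' a' b' := by rw [h1, h2]

/-- The toggle predicate for a pivot: the two class vectors are distinct and both nonzero. -/
def Tog (a b c d : Prop) : Prop := (a ∨ b) ∧ (c ∨ d) ∧ ¬((a ↔ c) ∧ (b ↔ d))

lemma aux_sdFlip_adj (G : SimpleGraph V) (p : V → V → Prop) (x y : V) :
    (sdFlip G p).Adj x y ↔ x ≠ y ∧ Xor' (G.Adj x y) (p x y ∨ p y x) := Iff.rfl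

/-- Effect of a pivot on pairs avoiding the pivoted edge. -/
lemma aux_pivot_adj (G : SimpleGraph V) {u v : V} (huv : G.Adj u v) {x y : V}
    (hxu : x ≠ u) (hxv : x ≠ v) (hyu : y ≠ u) (hyv : y ≠ v) :
    (pivot G u v).Adj x y ↔
      x ≠ y ∧ Xor' (G.Adj x y) (Tog (G.Adj u x) (G.Adj v x) (G.Adj u y) (G.Adj v y)) := by
  have h1 : u ≠ x := Ne.symm hxu
  have h2 : v ≠ x := Ne.symm hxv
  have h3 : u ≠ y := Ne.symm hyu
  have h4 : v ≠ y := Ne.symm hyv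
  have h5 : v ≠ u := (G.ne_of_adj huv).symm
  have h6 : u ≠ v := G.ne_of_adj huv
  have hvu : G.Adj v u := huv.symm
  have hnuu : ¬ G.Adj u u := G.irrefl
  have hnvv : ¬ G.Adj v v := G.irrefl
  simp only [pivot, localComp, aux_sdFlip_adj]
  by_cases hA : G.Adj x y <;> by_cases hB : G.Adj u x <;> by_cases hC : G.Adj v x <;>
    by_cases hD : G.Adj u y <;> by_cases hE : G.Adj v y <;>
    simp_all [Xor', Tog]

/-- A pivot swaps the neighbourhoods of its two endpoints. -/
lemma aux_pivot_swap (G : SimpleGraph V) {u v : V} (huv : G.Adj u v) {x : V}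
    (hxu : x ≠ u) (hxv : x ≠ v) :
    (pivot G u v).Adj u x ↔ G.Adj v x := by
  have h1 : u ≠ x := Ne.symm hxu
  have h2 : v ≠ x := Ne.symm hxv
  have h5 : v ≠ u := (G.ne_of_adj huv).symm
  have h6 : u ≠ v := G.ne_of_adj huv
  have hvu : G.Adj v u := huv.symm
  have hnuu : ¬ G.Adj u u := G.irrefl
  have hnvv : ¬ G.Adj v v := G.irrefl
  simp only [pivot, localComp, aux_sdFlip_adj]
  by_cases hB : G.Adj u x <;> by_cases hC : G.Adj v x <;> simp_all [Xor']

end Aux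
section Grid
/-- The "column model" adjacency: paths plus a column-determined flip. -/
def gAdj (M n : ℕ) (f : Fin n → Fin n → Prop) (x y : Fin M × Fin n) : Prop :=
  x ≠ y ∧ Xor' ((pathsGraph M n).Adj x y) (f x.2 y.2)

lemma aux_gAdj_offrow {M n : ℕ} {f : Fin n → Fin n → Prop} {x y : Fin M × Fin n}
    (h : x.1 ≠ y.1) : gAdj M n f x y ↔ f x.2 y.2 := by
  have hne : x ≠ y := fun he => h (congrArg Prod.fst he)
  have hp : ¬ (pathsGraph M n).Adj x y := fun hadj => h hadj.1
  simp [gAdj, hne, hp, Xor']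

lemma aux_pathsGraph_adj {M n : ℕ} {x y : Fin M × Fin n} :
    (pathsGraph M n).Adj x y ↔ x.1 = y.1 ∧ ((x.2 : ℕ) + 1 = y.2 ∨ (y.2 : ℕ) + 1 = x.2) := by
  constructor
  · rintro ⟨h1, h2⟩; exact ⟨h1, pathGraph_adj.mp h2⟩
  · rintro ⟨h1, h2⟩; exact ⟨h1, pathGraph_adj.mpr h2⟩

/-- Pivoting on an edge whose two endpoints see the kept set `K` in a column-determined
way transforms a column model into another column model. -/
lemma aux_pat_pivot {M n : ℕ} {G : SimpleGraph (Fin M × Fin n)} {K : Set (Fin M × Fin n)}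
    {u v : Fin M × Fin n} {α β : Fin n → Prop} {f : Fin n → Fin n → Prop}
    (huv : G.Adj u v) (hu : u ∉ K) (hv : v ∉ K)
    (hreg : ∀ x ∈ K, ∀ y ∈ K, (G.Adj x y ↔ gAdj M n f x y))
    (hα : ∀ x ∈ K, (G.Adj u x ↔ α x.2)) (hβ : ∀ x ∈ K, (G.Adj v x ↔ β x.2)) :
    ∀ x ∈ K, ∀ y ∈ K, ((pivot G u v).Adj x y ↔
      gAdj M n (fun j j' => Xor' (f j j') (Tog (α j) (β j) (α j') (β j'))) x y) := by
  intro x hx y hy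
  have hxu : x ≠ u := fun h => hu (h ▸ hx)
  have hxv : x ≠ v := fun h => hv (h ▸ hx)
  have hyu : y ≠ u := fun h => hu (h ▸ hy)
  have hyv : y ≠ v := fun h => hv (h ▸ hy)
  rw [aux_pivot_adj G huv hxu hxv hyu hyv]
  have e1 : G.Adj u x ↔ α x.2 := hα x hx
  have e2 : G.Adj v x ↔ β x.2 := hβ x hx
  have e3 : G.Adj u y ↔ α y.2 := hα y hy
  have e4 : G.Adj v y ↔ β y.2 := hβ y hy
  have eT : Tog (G.Adj u x) (G.Adj v x) (G.Adj u y) (G.Adj v y) ↔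
      Tog (α x.2) (β x.2) (α y.2) (β y.2) := by rw [e1, e2, e3, e4]
  rw [hreg x hx y hy, eT]
  by_cases hxy : x = y
  · simp [gAdj, hxy]
  · simp only [gAdj, hxy, Ne, not_false_iff, true_and]
    exact aux_xor_assoc

lemma aux_pivotSeq_append {V : Type u} (G : SimpleGraph V) (l1 l2 : List (V × V)) :
    pivotSeq G (l1 ++ l2) = pivotSeq (pivotSeq G l1) l2 := by
  induction l1 generalizing G with
  | nil => rfl
  | cons e l ih => simp [pivotSeq, ih]

lemma aux_validPivots_append {V : Type u} (G : SimpleGraph V) (l1 l2 : List (V × V))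
    (h1 : ValidPivots G l1) (h2 : ValidPivots (pivotSeq G l1) l2) :
    ValidPivots G (l1 ++ l2) := by
  induction l1 generalizing G with
  | nil => exact h2
  | cons e l ih => exact ⟨h1.1, ih _ h1.2 h2⟩

end Grid
section Chain

lemma aux_tog_ff {a b : Prop} : Tog a False b False ↔ False := by
  constructor
  · rintro ⟨_, _, h⟩; exact h ⟨by tauto, Iff.rfl⟩
  · exact False.elim

lemma aux_tog_tf {a b : Prop} : Tog a True b False ↔ b := by
  constructor
  · rintro ⟨_, hb, _⟩; tauto
  · intro hb; exact ⟨Or.inr trivial, Or.inl hb, fun ⟨_, h2⟩ => h2.mp trivial⟩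

lemma aux_col_ne {M n : ℕ} {r r' : Fin M} {a b : Fin n} (h : (a : ℕ) ≠ (b : ℕ)) :
    (r, a) ≠ ((r', b) : Fin M × Fin n) :=
  fun he => h (congrArg (fun p : Fin M × Fin n => (p.2 : ℕ)) he)

variable {M n : ℕ} {f : Fin n → Fin n → Prop} {RS : Fin M → Prop} {r : Fin M}

/-- One step of the chain: pivot on the path edge `(r,c)-(r,c+1)` and push the charge
from column `c` to column `c+2`. -/
lemma aux_chain_step (hfs : ∀ a b, f a b → f b a) (hr : RS r)
    {G : SimpleGraph (Fin M × Fin n)} {c : ℕ} (hc2 : c + 2 < n)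
    {ch : Fin n → Prop}
    (hP1 : ∀ x y : Fin M × Fin n, RS x.1 → RS y.1 → (x.1 ≠ r ∨ c < x.2.val) →
        (y.1 ≠ r ∨ c < y.2.val) → (G.Adj x y ↔ gAdj M n f x y))
    (hP2 : ∀ x : Fin M × Fin n, RS x.1 → (x.1 ≠ r ∨ c < x.2.val) →
        (G.Adj (r, ⟨c, by omega⟩) x ↔ Xor' (gAdj M n f (r, ⟨c, by omega⟩) x) (ch x.2)))
    (hnull : ∀ c', ¬ f ⟨c+1, by omega⟩ c')
    (hch : ¬ ch ⟨c+1, by omega⟩) :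
    G.Adj (r, ⟨c, by omega⟩) (r, ⟨c+1, by omega⟩) ∧
    (∀ x y : Fin M × Fin n, RS x.1 → RS y.1 → (x.1 ≠ r ∨ c+2 < x.2.val) →
        (y.1 ≠ r ∨ c+2 < y.2.val) →
        ((pivot G (r, ⟨c, by omega⟩) (r, ⟨c+1, by omega⟩)).Adj x y ↔ gAdj M n f x y)) ∧
    (∀ x : Fin M × Fin n, RS x.1 → (x.1 ≠ r ∨ c+2 < x.2.val) →
        ((pivot G (r, ⟨c, by omega⟩) (r, ⟨c+1, by omega⟩)).Adj (r, ⟨c+2, hc2⟩) x ↔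
          Xor' (gAdj M n f (r, ⟨c+2, hc2⟩) x) (Xor' (f x.2 ⟨c, by omega⟩) (ch x.2)))) := by
  set u : Fin M × Fin n := (r, ⟨c, by omega⟩) with hu
  set v : Fin M × Fin n := (r, ⟨c+1, by omega⟩) with hv
  set w : Fin M × Fin n := (r, ⟨c+2, hc2⟩) with hw
  have huvne : u ≠ v := aux_col_ne (show c ≠ c + 1 by omega)
  have hnfc : ¬ f (⟨c, by omega⟩ : Fin n) ⟨c+1, by omega⟩ := fun h => hnull _ (hfs _ _ h)
  have hpuv : (pathsGraph M n).Adj u v := by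
    rw [aux_pathsGraph_adj]; exact ⟨rfl, Or.inl rfl⟩
  have hguv : gAdj M n f u v := ⟨huvne, Or.inl ⟨hpuv, hnfc⟩⟩
  have hedge : G.Adj u v := by
    rw [hP2 v hr (Or.inr (show c < c + 1 by omega))]
    exact Or.inl ⟨hguv, hch⟩
  -- auxiliary facts about an arbitrary suitably fresh vertex x
  have hfreshne : ∀ x : Fin M × Fin n, (x.1 ≠ r ∨ c+2 < x.2.val) → x ≠ u ∧ x ≠ v ∧ x ≠ w := by
    rintro x (hx | hx)
    · exact ⟨fun h => hx (by rw [h]), fun h => hx (by rw [h]), fun h => hx (by rw [h])⟩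
    · refine ⟨fun h => ?_, fun h => ?_, fun h => ?_⟩ <;> rw [h] at hx
      · exact (show ¬ (c + 2 < c) by omega) hx
      · exact (show ¬ (c + 2 < c + 1) by omega) hx
      · exact (show ¬ (c + 2 < c + 2) by omega) hx
  have hAv : ∀ x : Fin M × Fin n, RS x.1 → (x.1 ≠ r ∨ c+2 < x.2.val) → ¬ G.Adj v x := by
    intro x hxRS hxf
    rw [hP1 v x hr hxRS (Or.inr (show c < c + 1 by omega))
      (by rcases hxf with h | h; exacts [Or.inl h, Or.inr (by omega)])]
    rintro ⟨hne, hx2⟩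
    rcases hx2 with ⟨hp, -⟩ | ⟨hf, -⟩
    · rw [aux_pathsGraph_adj] at hp
      rcases hxf with h | h
      · exact h hp.1.symm
      · obtain ⟨-, h2 | h2⟩ := hp
        · exact (show ¬ ((c+1) + 1 = (x.2:ℕ)) by omega) h2
        · exact (show ¬ ((x.2:ℕ) + 1 = c + 1) by omega) h2
    · exact hnull _ hf
  have hAu : ∀ x : Fin M × Fin n, RS x.1 → (x.1 ≠ r ∨ c+2 ≤ x.2.val) →
      (G.Adj u x ↔ Xor' (f x.2 ⟨c, by omega⟩) (ch x.2)) := by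
    intro x hxRS hxf
    rw [hP2 x hxRS (by rcases hxf with h | h; exacts [Or.inl h, Or.inr (by omega)])]
    have hne : u ≠ x := by
      rcases hxf with h | h
      · exact fun he => h (by rw [← he])
      · exact fun he => (show ¬ (c + 2 ≤ c) by omega) (by rw [← he] at h; exact h)
    have hgux : gAdj M n f u x ↔ f x.2 ⟨c, by omega⟩ := by
      have hnp : ¬ (pathsGraph M n).Adj u x := by
        rw [aux_pathsGraph_adj]
        rintro ⟨h1, h2⟩
        rcases hxf with h | h
        · exact h h1.symm
        · rcases h2 with h2 | h2
          · exact (show ¬ (c + 1 = (x.2:ℕ)) by omega) h2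
          · exact (show ¬ ((x.2:ℕ) + 1 = c) by omega) h2
      have hsm : f u.2 x.2 ↔ f x.2 ⟨c, by omega⟩ := ⟨fun h => hfs _ _ h, fun h => hfs _ _ h⟩
      simp [gAdj, hne, hnp, Xor', hsm]
    rw [aux_xor_congr hgux Iff.rfl]
  -- the two coordinates of w's class vector
  have hAvw : G.Adj v w := by
    rw [hP1 v w hr hr (Or.inr (show c < c + 1 by omega)) (Or.inr (show c < c + 2 by omega))]
    refine ⟨aux_col_ne (show c + 1 ≠ c + 2 by omega), Or.inl ⟨?_, ?_⟩⟩
    · rw [aux_pathsGraph_adj]; exact ⟨rfl, Or.inl rfl⟩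
    · exact fun h => hnull _ h
  have hAuw : G.Adj u w ↔ Xor' (f w.2 ⟨c, by omega⟩) (ch w.2) :=
    hAu w hr (Or.inr (show c + 2 ≤ c + 2 by omega))
  refine ⟨hedge, ?_, ?_⟩
  · intro x y hxRS hyRS hxf hyf
    obtain ⟨hxu, hxv, -⟩ := hfreshne x hxf
    obtain ⟨hyu, hyv, -⟩ := hfreshne y hyf
    rw [aux_pivot_adj G hedge hxu hxv hyu hyv]
    have e1 : Tog (G.Adj u x) (G.Adj v x) (G.Adj u y) (G.Adj v y) ↔ False := by
      have hx0 : G.Adj v x ↔ False := iff_false_intro (hAv x hxRS hxf)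
      have hy0 : G.Adj v y ↔ False := iff_false_intro (hAv y hyRS hyf)
      rw [hx0, hy0, aux_tog_ff]
    rw [e1]
    rw [hP1 x y hxRS hyRS (by rcases hxf with h | h; exacts [Or.inl h, Or.inr (by omega)])
      (by rcases hyf with h | h; exacts [Or.inl h, Or.inr (by omega)])]
    constructor
    · rintro ⟨hne, ⟨h, -⟩ | ⟨h, -⟩⟩
      · exact h
      · exact absurd h not_false
    · intro h; exact ⟨h.1, Or.inl ⟨h, not_false⟩⟩
  · intro x hxRS hxf
    obtain ⟨hxu, hxv, hxw⟩ := hfreshne x hxf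
    have hwu : w ≠ u := aux_col_ne (show c + 2 ≠ c by omega)
    have hwv : w ≠ v := aux_col_ne (show c + 2 ≠ c + 1 by omega)
    rw [aux_pivot_adj G hedge hwu hwv hxu hxv]
    have e1 : Tog (G.Adj u w) (G.Adj v w) (G.Adj u x) (G.Adj v x) ↔
        Xor' (f x.2 ⟨c, by omega⟩) (ch x.2) := by
      have h2 : G.Adj v w ↔ True := iff_true_intro hAvw
      have h4 : G.Adj v x ↔ False := iff_false_intro (hAv x hxRS hxf)
      rw [h2, h4, hAuw,
        hAu x hxRS (by rcases hxf with h | h; exacts [Or.inl h, Or.inr (by omega)]),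
        aux_tog_tf]
    rw [e1]
    have hregwx : G.Adj w x ↔ gAdj M n f w x :=
      hP1 w x hr hxRS (Or.inr (show c < c + 2 by omega))
        (by rcases hxf with h | h; exacts [Or.inl h, Or.inr (by omega)])
    rw [hregwx]
    have hwx : w ≠ x := Ne.symm hxw
    constructor
    · rintro ⟨-, h⟩; exact h
    · intro h; exact ⟨hwx, h⟩

end Chain
section ChainFull

lemma aux_xor_falser {a : Prop} : Xor' a False ↔ a := by simp [Xor', xor_def]
lemma aux_xor_falsel {a : Prop} : Xor' False a ↔ a := by simp [Xor']

variable {M n : ℕ} {f : Fin n → Fin n → Prop} {RS : Fin M → Prop} {r : Fin M}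

/-- The full chain: `s+1` pivots along the row `r`, pushing the charge of column `j0`
to column `j0+2+2s`. -/
lemma aux_chain (hfs : ∀ a b, f a b → f b a) (hr : RS r)
    {G0 : SimpleGraph (Fin M × Fin n)}
    (hreg : ∀ x y : Fin M × Fin n, RS x.1 → RS y.1 → (G0.Adj x y ↔ gAdj M n f x y))
    {j0 : ℕ} (s : ℕ) (hb : j0 + 2 + 2*s < n)
    (hnull : ∀ c' : Fin n, j0 < c'.val → c'.val < j0 + 2 + 2*s → ∀ c'', ¬ f c' c'') :
    ∃ l, ValidPivots G0 l ∧
      (∀ x y : Fin M × Fin n, RS x.1 → RS y.1 → (x.1 ≠ r ∨ j0+2+2*s < x.2.val) →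
        (y.1 ≠ r ∨ j0+2+2*s < y.2.val) → ((pivotSeq G0 l).Adj x y ↔ gAdj M n f x y)) ∧
      (∀ x : Fin M × Fin n, RS x.1 → (x.1 ≠ r ∨ j0+2+2*s < x.2.val) →
        ((pivotSeq G0 l).Adj (r, ⟨j0+2+2*s, hb⟩) x ↔
          Xor' (gAdj M n f (r, ⟨j0+2+2*s, hb⟩) x) (f x.2 ⟨j0, by omega⟩))) := by
  induction s with
  | zero =>
    obtain ⟨hedge, hp1, hp2⟩ := aux_chain_step (G := G0) (c := j0) (ch := fun _ => False)
      hfs hr (by omega)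
      (fun x y hx hy _ _ => hreg x y hx hy)
      (fun x hx _ => by rw [hreg _ x hr hx, aux_xor_falser])
      (fun c'' => hnull ⟨j0+1, by omega⟩ (show j0 < j0+1 by omega) (show j0+1 < j0+2+2*0 by omega) c'')
      not_false
    refine ⟨[((r, ⟨j0, by omega⟩), (r, ⟨j0+1, by omega⟩))], ⟨hedge, trivial⟩, hp1, ?_⟩
    intro x hx hxf
    rw [show (pivotSeq G0 [((r, ⟨j0, by omega⟩), (r, ⟨j0+1, by omega⟩))]) =
      pivot G0 (r, ⟨j0, by omega⟩) (r, ⟨j0+1, by omega⟩) from rfl]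
    rw [hp2 x hx hxf, aux_xor_congr Iff.rfl aux_xor_falser]
  | succ s ih =>
    obtain ⟨l, hval, hp1, hp2⟩ := ih (by omega)
      (fun c' h1 h2 c'' => hnull c' h1 (by omega) c'')
    obtain ⟨hedge, hq1, hq2⟩ := aux_chain_step (G := pivotSeq G0 l) (c := j0+2+2*s)
      (ch := fun j => f j ⟨j0, by omega⟩) hfs hr (by omega) hp1 hp2
      (fun c'' => hnull ⟨j0+2+2*s+1, by omega⟩ (show j0 < j0+2+2*s+1 by omega)
        (show j0+2+2*s+1 < j0+2+2*(s+1) by omega) c'')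
      (fun h => hnull ⟨j0+2+2*s+1, by omega⟩ (show j0 < j0+2+2*s+1 by omega)
        (show j0+2+2*s+1 < j0+2+2*(s+1) by omega) _ h)
    refine ⟨l ++ [((r, ⟨j0+2+2*s, by omega⟩), (r, ⟨j0+2+2*s+1, by omega⟩))], ?_, ?_, ?_⟩
    · exact aux_validPivots_append _ _ _ hval ⟨hedge, trivial⟩
    · intro x y hx hy hxf hyf
      rw [aux_pivotSeq_append]
      exact hq1 x y hx hy (by rcases hxf with h | h; exacts [Or.inl h, Or.inr (by omega)])
        (by rcases hyf with h | h; exacts [Or.inl h, Or.inr (by omega)])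
    · intro x hx hxf
      rw [aux_pivotSeq_append]
      have hz : f x.2 ⟨j0+2+2*s, by omega⟩ ↔ False :=
        iff_false_intro (fun h => hnull ⟨j0+2+2*s, by omega⟩ (show j0 < j0+2+2*s by omega) (show j0+2+2*s < j0+2+2*(s+1) by omega) _ (hfs _ _ h))
      have h2 := hq2 x hx (by rcases hxf with h | h; exacts [Or.inl h, Or.inr (by omega)])
      show ((pivotSeq (pivotSeq G0 l)
          [((r, ⟨j0+2+2*s, by omega⟩), (r, ⟨j0+2+2*s+1, by omega⟩))]).Adj
            (r, ⟨j0+2+2*s+2, by omega⟩) x ↔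
          Xor' (gAdj M n f (r, ⟨j0+2+2*s+2, by omega⟩) x) (f x.2 ⟨j0, by omega⟩))
      rw [show (pivotSeq (pivotSeq G0 l)
          [((r, ⟨j0+2+2*s, by omega⟩), (r, ⟨j0+2+2*s+1, by omega⟩))]) =
        pivot (pivotSeq G0 l) (r, ⟨j0+2+2*s, by omega⟩) (r, ⟨j0+2+2*s+1, by omega⟩) from rfl]
      rw [h2, aux_xor_congr Iff.rfl (aux_xor_congr hz Iff.rfl),
        aux_xor_congr Iff.rfl aux_xor_falsel]

end ChainFull
section Coarsen

variable {M n : ℕ}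

/-- The column-level relation induced by a collection `P` and pair set `F`. -/
def CrelOf (M n : ℕ) (P : Set (Set (Fin M × Fin n)))
    (F : Set (Set (Fin M × Fin n) × Set (Fin M × Fin n))) (j j' : Fin n) : Prop :=
  ∃ X ∈ P, ∃ X' ∈ P, column M n j ⊆ X ∧ column M n j' ⊆ X' ∧ (X, X') ∈ F

lemma aux_mem_column {x : Fin M × Fin n} {j : Fin n} : x ∈ column M n j ↔ x.2 = j := Iff.rfl

lemma aux_col_subset {P : Set (Set (Fin M × Fin n))}
    (hP : IsCoarsening P (columnSet M n)) {X : Set (Fin M × Fin n)} (hX : X ∈ P)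
    {x : Fin M × Fin n} (hx : x ∈ X) : column M n x.2 ⊆ X := by
  obtain ⟨C, hC, rfl⟩ := hP.2 X hX
  obtain ⟨c, hc, hxc⟩ := hx
  obtain ⟨j, rfl⟩ := hC hc
  have : x.2 = j := hxc
  rw [this]
  exact Set.subset_sUnion_of_mem hc

lemma aux_block_eq {P : Set (Set (Fin M × Fin n))}
    (hP : IsCoarsening P (columnSet M n)) {X Y : Set (Fin M × Fin n)} (hX : X ∈ P)
    (hY : Y ∈ P) {x : Fin M × Fin n} (hx : x ∈ X) (hy : x ∈ Y) : X = Y := by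
  by_contra hne
  exact Set.disjoint_left.mp (hP.1.2 hX hY hne) hx hy

lemma aux_blockOf_F {P : Set (Set (Fin M × Fin n))}
    (hP : IsCoarsening P (columnSet M n))
    {F : Set (Set (Fin M × Fin n) × Set (Fin M × Fin n))} (hFP : F ⊆ P ×ˢ P)
    (x y : Fin M × Fin n) :
    (blockOf P x, blockOf P y) ∈ F ↔ CrelOf M n P F x.2 y.2 := by
  classical
  constructor
  · intro hF
    have hx : ∃ X ∈ P, x ∈ X := by
      by_contra h
      have hb : blockOf P x = {x} := by rw [blockOf, dif_neg h]
      have := (hFP hF).1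
      rw [hb] at this
      exact h ⟨{x}, this, rfl⟩
    have hy : ∃ X ∈ P, y ∈ X := by
      by_contra h
      have hb : blockOf P y = {y} := by rw [blockOf, dif_neg h]
      have := (hFP hF).2
      rw [hb] at this
      exact h ⟨{y}, this, rfl⟩
    have hbx : blockOf P x ∈ P ∧ x ∈ blockOf P x := by
      rw [blockOf, dif_pos hx]; exact hx.choose_spec
    have hby : blockOf P y ∈ P ∧ y ∈ blockOf P y := by
      rw [blockOf, dif_pos hy]; exact hy.choose_spec
    exact ⟨blockOf P x, hbx.1, blockOf P y, hby.1,
      aux_col_subset hP hbx.1 hbx.2, aux_col_subset hP hby.1 hby.2, hF⟩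
  · rintro ⟨X, hX, X', hX', hjx, hjy, hF⟩
    have hxX : x ∈ X := hjx rfl
    have hyX : y ∈ X' := hjy rfl
    have hx : ∃ Z ∈ P, x ∈ Z := ⟨X, hX, hxX⟩
    have hy : ∃ Z ∈ P, y ∈ Z := ⟨X', hX', hyX⟩
    have hbx : blockOf P x ∈ P ∧ x ∈ blockOf P x := by
      rw [blockOf, dif_pos hx]; exact hx.choose_spec
    have hby : blockOf P y ∈ P ∧ y ∈ blockOf P y := by
      rw [blockOf, dif_pos hy]; exact hy.choose_spec
    rw [aux_block_eq hP hbx.1 hX hbx.2 hxX, aux_block_eq hP hby.1 hX' hby.2 hyX]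
    exact hF

lemma aux_crel_symm {P : Set (Set (Fin M × Fin n))}
    {F : Set (Set (Fin M × Fin n) × Set (Fin M × Fin n))} (hFs : SymmRelSet F)
    {j j' : Fin n} (h : CrelOf M n P F j j') : CrelOf M n P F j' j := by
  obtain ⟨X, hX, X', hX', h1, h2, hF⟩ := h
  exact ⟨X', hX', X, hX, h2, h1, hFs _ _ hF⟩

/-- The `(P,F)`-flip of `mPₙ` is exactly the column model of `CrelOf P F`. -/
lemma aux_collFlip_gAdj {P : Set (Set (Fin M × Fin n))}
    (hP : IsCoarsening P (columnSet M n))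
    {F : Set (Set (Fin M × Fin n) × Set (Fin M × Fin n))} (hFP : F ⊆ P ×ˢ P)
    (hFs : SymmRelSet F) (x y : Fin M × Fin n) :
    (collFlip (pathsGraph M n) P F).Adj x y ↔ gAdj M n (CrelOf M n P F) x y := by
  have h1 : (collFlip (pathsGraph M n) P F).Adj x y ↔ x ≠ y ∧
      Xor' ((pathsGraph M n).Adj x y)
        ((blockOf P x, blockOf P y) ∈ F ∨ (blockOf P y, blockOf P x) ∈ F) := Iff.rfl
  rw [h1]
  have h2 : ((blockOf P x, blockOf P y) ∈ F ∨ (blockOf P y, blockOf P x) ∈ F) ↔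
      CrelOf M n P F x.2 y.2 := by
    rw [aux_blockOf_F hP hFP, aux_blockOf_F hP hFP]
    constructor
    · rintro (h | h)
      · exact h
      · exact aux_crel_symm hFs h
    · exact Or.inl
  rw [gAdj, h2]

/-- Constancy of `CrelOf` on the columns of one block. -/
lemma aux_crel_const_mp {P : Set (Set (Fin M × Fin n))}
    (hM : 0 < M) (hP : IsCoarsening P (columnSet M n))
    {F : Set (Set (Fin M × Fin n) × Set (Fin M × Fin n))}
    {X : Set (Fin M × Fin n)} (hX : X ∈ P) {j j' : Fin n}
    (hj : column M n j ⊆ X) (hj' : column M n j' ⊆ X) {l : Fin n}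
    (h : CrelOf M n P F j l) : CrelOf M n P F j' l := by
  obtain ⟨X1, hX1, X2, hX2, hs1, hs2, hF⟩ := h
  have hpt : ((⟨0, hM⟩, j) : Fin M × Fin n) ∈ column M n j := rfl
  have hX1X : X1 = X := aux_block_eq hP hX1 hX (hs1 hpt) (hj hpt)
  exact ⟨X, hX, X2, hX2, hj', hs2, hX1X ▸ hF⟩

lemma aux_crel_const {P : Set (Set (Fin M × Fin n))}
    (hM : 0 < M) (hP : IsCoarsening P (columnSet M n))
    {F : Set (Set (Fin M × Fin n) × Set (Fin M × Fin n))}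
    {X : Set (Fin M × Fin n)} (hX : X ∈ P) {j j' : Fin n}
    (hj : column M n j ⊆ X) (hj' : column M n j' ⊆ X) (l : Fin n) :
    CrelOf M n P F j l ↔ CrelOf M n P F j' l :=
  ⟨aux_crel_const_mp hM hP hX hj hj', aux_crel_const_mp hM hP hX hj' hj⟩

lemma aux_crel_cov {P : Set (Set (Fin M × Fin n))}
    {F : Set (Set (Fin M × Fin n) × Set (Fin M × Fin n))} {j l : Fin n}
    (h : CrelOf M n P F j l) : ∃ X ∈ P, column M n j ⊆ X := by
  obtain ⟨X, hX, X2, hX2, hs1, hs2, hF⟩ := h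
  exact ⟨X, hX, hs1⟩

end Coarsen
section Package

/-- Packaging: a pivot sequence whose result is a column model on the first `m` rows,
together with a good presentation of the new column relation, yields the desired
`(k-1)`-flipped `mPₙ` pivot-minor. -/
lemma aux_package {m n k : ℕ} (hm : 1 ≤ m)
    {P : Set (Set (Fin (m+4) × Fin n))} (hP : IsCoarsening P (columnSet (m+4) n))
    {F : Set (Set (Fin (m+4) × Fin n) × Set (Fin (m+4) × Fin n))}
    (l : List ((Fin (m+4) × Fin n) × (Fin (m+4) × Fin n)))
    (hval : ValidPivots (collFlip (pathsGraph (m+4) n) P F) l)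
    (f2 : Fin n → Fin n → Prop)
    (hreg : ∀ x y : Fin (m+4) × Fin n, x.1.val < m → y.1.val < m →
      ((pivotSeq (collFlip (pathsGraph (m+4) n) P F) l).Adj x y ↔ gAdj (m+4) n f2 x y))
    (P2 : Set (Set (Fin n)))
    (hP2ne : ∀ c ∈ P2, c.Nonempty)
    (hP2disj : P2.PairwiseDisjoint id)
    (hP2card : P2.ncard ≤ k - 1)
    (hcov : ∀ j j' : Fin n, f2 j j' → ∃ c ∈ P2, j ∈ c)
    (hconst : ∀ c ∈ P2, ∀ j ∈ c, ∀ jj ∈ c, ∀ l', f2 j l' ↔ f2 jj l')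
    (hsymm : ∀ j j', f2 j j' → f2 j' j) :
    ∃ G' : SimpleGraph (Fin m × Fin n), IsKFlippedPaths (k-1) m n G' ∧
      IsPivotMinorOf G' (collFlip (pathsGraph (m+4) n) P F) := by
  classical
  set cyl : Set (Fin n) → Set (Fin m × Fin n) := fun c => {p | p.2 ∈ c} with hcyl
  set P' : Set (Set (Fin m × Fin n)) := cyl '' P2 with hP'
  set F' : Set (Set (Fin m × Fin n) × Set (Fin m × Fin n)) :=
    {q | ∃ c ∈ P2, ∃ c' ∈ P2, q = (cyl c, cyl c') ∧ ∃ j ∈ c, ∃ j' ∈ c', f2 j j'} with hF'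
  have hcolcyl : ∀ (j : Fin n) (c : Set (Fin n)), column m n j ⊆ cyl c ↔ j ∈ c := by
    intro j c
    constructor
    · intro h
      exact h (show ((⟨0, by omega⟩ : Fin m), j) ∈ column m n j from rfl)
    · intro h p hp
      have : p.2 = j := hp
      simp only [hcyl, Set.mem_setOf_eq, this]
      exact h
  -- the new collection is a coarsening of the small column set
  have hcoars : IsCoarsening P' (columnSet m n) := by
    refine ⟨⟨?_, ?_⟩, ?_⟩
    · rintro X ⟨c, hc, rfl⟩
      obtain ⟨j, hj⟩ := hP2ne c hc
      exact ⟨((⟨0, by omega⟩ : Fin m), j), hj⟩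
    · rintro X ⟨c, hc, rfl⟩ Y ⟨c', hc', rfl⟩ hne
      have hcc' : c ≠ c' := fun h => hne (by rw [h])
      have hd := hP2disj hc hc' hcc'
      refine Set.disjoint_left.mpr ?_
      intro p hp hp'
      exact (Set.disjoint_left.mp hd (show p.2 ∈ c from hp)) (show p.2 ∈ c' from hp')
    · rintro X ⟨c, hc, rfl⟩
      refine ⟨(fun j => column m n j) '' c, ?_, ?_⟩
      · rintro _ ⟨j, hj, rfl⟩; exact ⟨j, rfl⟩
      · ext p
        simp only [Set.sUnion_image, Set.mem_iUnion, aux_mem_column]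
        constructor
        · intro hp; exact ⟨p.2, hp, rfl⟩
        · rintro ⟨j, hj, hp⟩; show p.2 ∈ c; rw [hp]; exact hj
  have hFsub' : F' ⊆ P' ×ˢ P' := by
    rintro q ⟨c, hc, c', hc', rfl, -⟩
    exact ⟨⟨c, hc, rfl⟩, ⟨c', hc', rfl⟩⟩
  have hFsymm' : SymmRelSet F' := by
    rintro a b ⟨c, hc, c', hc', he, j, hj, j', hj', hf⟩
    have h1 : a = cyl c := congrArg Prod.fst he
    have h2 : b = cyl c' := congrArg Prod.snd he
    exact ⟨c', hc', c, hc, by rw [h1, h2], j', hj', j, hj, hsymm _ _ hf⟩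
  -- the small column relation equals f2
  have hcrel : ∀ j j' : Fin n, CrelOf m n P' F' j j' ↔ f2 j j' := by
    intro j j'
    constructor
    · rintro ⟨X, hX, X', hX', h1, h2, c, hc, c', hc', he, ja, hja, jb, hjb, hf⟩
      have hXc : X = cyl c := congrArg Prod.fst he
      have hXc' : X' = cyl c' := congrArg Prod.snd he
      rw [hXc] at h1; rw [hXc'] at h2
      have hjc : j ∈ c := (hcolcyl j c).mp h1
      have hjc' : j' ∈ c' := (hcolcyl j' c').mp h2
      have hstep1 : f2 j jb := (hconst c hc j hjc ja hja jb).mpr hf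
      have hstep2 : f2 j' j := (hconst c' hc' j' hjc' jb hjb j).mpr (hsymm _ _ hstep1)
      exact hsymm _ _ hstep2
    · intro hf
      obtain ⟨c, hc, hjc⟩ := hcov j j' hf
      obtain ⟨c', hc', hjc'⟩ := hcov j' j (hsymm _ _ hf)
      exact ⟨cyl c, ⟨c, hc, rfl⟩, cyl c', ⟨c', hc', rfl⟩, (hcolcyl j c).mpr hjc,
        (hcolcyl j' c').mpr hjc', ⟨c, hc, c', hc', rfl, j, hjc, j', hjc', hf⟩⟩
  refine ⟨collFlip (pathsGraph m n) P' F', ⟨P', F', hcoars, ?_, hFsub', hFsymm', rfl⟩, ?_⟩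
  · exact le_trans (Set.ncard_image_le (Set.toFinite P2)) hP2card
  · refine ⟨l, {x : Fin (m+4) × Fin n | x.1.val < m}, hval, ⟨?_⟩⟩
    have elift : ∀ p : Fin m × Fin n, ((⟨p.1.val, by omega⟩ : Fin (m+4)), p.2) ∈
        {x : Fin (m+4) × Fin n | x.1.val < m} := fun p => p.1.isLt
    refine ⟨⟨fun p => ⟨((⟨p.1.val, by omega⟩ : Fin (m+4)), p.2), elift p⟩,
      fun q => ((⟨q.val.1.val, q.prop⟩ : Fin m), q.val.2), fun p => rfl, fun q => rfl⟩, ?_⟩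
    intro a b
    show (pivotSeq (collFlip (pathsGraph (m+4) n) P F) l).Adj
        ((⟨a.1.val, by omega⟩ : Fin (m+4)), a.2) ((⟨b.1.val, by omega⟩ : Fin (m+4)), b.2) ↔
      (collFlip (pathsGraph m n) P' F').Adj a b
    rw [hreg _ _ a.1.isLt b.1.isLt, aux_collFlip_gAdj hcoars hFsub' hFsymm']
    have hrow : ((⟨a.1.val, by omega⟩ : Fin (m+4)) = (⟨b.1.val, by omega⟩ : Fin (m+4))) ↔
        a.1 = b.1 := by
      constructor
      · intro h
        have hv := congrArg Fin.val h
        exact Fin.ext hv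
      · intro h; exact Fin.ext (show a.1.val = b.1.val from congrArg Fin.val h)
    have hne : (((⟨a.1.val, by omega⟩ : Fin (m+4)), a.2) =
        ((⟨b.1.val, by omega⟩ : Fin (m+4)), b.2)) ↔ a = b := by
      rw [Prod.mk.injEq, Prod.ext_iff, hrow]
    have hpaths : (pathsGraph (m+4) n).Adj ((⟨a.1.val, by omega⟩ : Fin (m+4)), a.2)
        ((⟨b.1.val, by omega⟩ : Fin (m+4)), b.2) ↔ (pathsGraph m n).Adj a b := by
      rw [aux_pathsGraph_adj, aux_pathsGraph_adj, hrow]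
    simp only [gAdj]
    rw [aux_xor_congr hpaths.symm (hcrel a.2 b.2)]
    constructor
    · rintro ⟨h1, h2⟩; exact ⟨fun h => h1 (by rw [h]), h2⟩
    · rintro ⟨h1, h2⟩; exact ⟨fun h => h1 (hne.mp h), h2⟩

end Package
section Moves

lemma aux_xor_comm {a b : Prop} : Xor' a b ↔ Xor' b a := by simp only [Xor', xor_def]; tauto
lemma aux_xor_self {a : Prop} : Xor' a a ↔ False := by simp only [Xor', xor_def]; tauto
lemma aux_xor_not_iff {a b : Prop} : Xor' a b ↔ ¬(a ↔ b) := by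
  simp only [Xor', xor_def]; by_cases a <;> by_cases b <;> tauto
lemma aux_xor_or {a b : Prop} (h : Xor' a b) : a ∨ b := by
  rcases h with ⟨h, -⟩ | ⟨h, -⟩; exacts [Or.inl h, Or.inr h]
lemma aux_tog_comm {a b c d : Prop} : Tog a b c d ↔ Tog c d a b := by
  simp only [Tog]; tauto
lemma aux_tog_self {a b : Prop} : Tog a b a b ↔ False := by simp only [Tog]; tauto
lemma aux_tog_00l {c d : Prop} : Tog False False c d ↔ False := by simp only [Tog]; tauto
lemma aux_tog_00r {a b : Prop} : Tog a b False False ↔ False := by simp only [Tog]; tauto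
lemma aux_tog_TF {c d : Prop} : Tog True False c d ↔ d := by
  simp only [Tog]; by_cases c <;> by_cases d <;> tauto
lemma aux_tog_FT {c d : Prop} : Tog False True c d ↔ c := by
  simp only [Tog]; by_cases c <;> by_cases d <;> tauto
lemma aux_tog_TT {c d : Prop} : Tog True True c d ↔ Xor' c d := by
  simp only [Tog, Xor', xor_def]; by_cases c <;> by_cases d <;> tauto
lemma aux_tog_or {a b c d : Prop} (h : Tog a b c d) : a ∨ b := h.1
lemma aux_tog_congr {a a' b b' c c' d d' : Prop} (h1 : a ↔ a') (h2 : b ↔ b')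
    (h3 : c ↔ c') (h4 : d ↔ d') : Tog a b c d ↔ Tog a' b' c' d' := by
  simp only [Tog]; rw [h1, h2, h3, h4]
lemma aux_xor_cancel {a b : Prop} : Xor' (Xor' a b) b ↔ a := by
  simp only [Xor', xor_def]; by_cases a <;> by_cases b <;> tauto

variable {M n : ℕ} {f : Fin n → Fin n → Prop} {RS : Fin M → Prop} {r : Fin M}
variable {K : Set (Fin M × Fin n)}

/-- Move A: a "pivot at odd distance" between columns `j1` and `j2` (with the strictly
intermediate columns all null), available when `¬ f j1 j2`. -/
lemma aux_moveA (hfs : ∀ a b, f a b → f b a) (hr : RS r)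
    {G0 : SimpleGraph (Fin M × Fin n)}
    (hreg : ∀ x y : Fin M × Fin n, RS x.1 → RS y.1 → (G0.Adj x y ↔ gAdj M n f x y))
    (hKRS : ∀ x ∈ K, RS x.1 ∧ x.1 ≠ r)
    {j1 j2 : Fin n} (hlt : j1.val < j2.val) (hodd : (j2.val - j1.val) % 2 = 1)
    (hnf : ¬ f j1 j2)
    (hgap : ∀ l : Fin n, j1.val < l.val → l.val < j2.val → ∀ c', ¬ f l c') :
    ∃ l, ValidPivots G0 l ∧ ∀ x ∈ K, ∀ y ∈ K, ((pivotSeq G0 l).Adj x y ↔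
      gAdj M n (fun j l' => Xor' (f j l')
        (Tog (f j j1) (f j j2) (f l' j1) (f l' j2))) x y) := by
  classical
  have hsymf : ∀ (a b : Fin n), f a b ↔ f b a := fun a b => ⟨hfs a b, hfs b a⟩
  by_cases ht1 : j2.val = j1.val + 1
  · -- single path-edge pivot
    set u : Fin M × Fin n := (r, j1) with hu
    set v : Fin M × Fin n := (r, j2) with hv
    have hedge : G0.Adj u v := by
      rw [hreg u v hr hr]
      refine ⟨aux_col_ne (show (j1:ℕ) ≠ (j2:ℕ) by omega), Or.inl ⟨?_, hnf⟩⟩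
      rw [aux_pathsGraph_adj]; exact ⟨rfl, Or.inl (show (j1:ℕ)+1 = (j2:ℕ) by omega)⟩
    have huK : u ∉ K := fun h => (hKRS u h).2 rfl
    have hvK : v ∉ K := fun h => (hKRS v h).2 rfl
    have hα : ∀ x ∈ K, (G0.Adj u x ↔ f x.2 j1) := by
      intro x hx
      rw [hreg u x hr (hKRS x hx).1,
        aux_gAdj_offrow (show u.1 ≠ x.1 from fun h => (hKRS x hx).2 h.symm)]
      exact hsymf j1 x.2
    have hβ : ∀ x ∈ K, (G0.Adj v x ↔ f x.2 j2) := by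
      intro x hx
      rw [hreg v x hr (hKRS x hx).1,
        aux_gAdj_offrow (show v.1 ≠ x.1 from fun h => (hKRS x hx).2 h.symm)]
      exact hsymf j2 x.2
    refine ⟨[(u, v)], ⟨hedge, trivial⟩, ?_⟩
    have := aux_pat_pivot (α := fun j => f j j1) (β := fun j => f j j2)
      hedge huK hvK (fun x hx y hy => hreg x y (hKRS x hx).1 (hKRS y hy).1) hα hβ
    intro x hx y hy
    exact this x hx y hy
  · -- chain then pivot
    have ht3 : j1.val + 3 ≤ j2.val := by omega
    obtain ⟨s, hs⟩ : ∃ s, j1.val + 2 + 2*s = j2.val - 1 := by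
      refine ⟨(j2.val - j1.val - 3)/2, ?_⟩
      omega
    obtain ⟨lc, hvalc, hp1, hp2⟩ := aux_chain hfs hr hreg (j0 := j1.val) s
      (by omega) (fun c' h1 h2 c'' => hgap c' h1 (by omega) c'')
    set hd : Fin M × Fin n := (r, ⟨j1.val+2+2*s, by omega⟩) with hhd
    set v : Fin M × Fin n := (r, j2) with hv
    have hvfresh : v.1 ≠ r ∨ j1.val+2+2*s < v.2.val := Or.inr (show j1.val+2+2*s < j2.val by omega)
    have hα : ∀ x ∈ K, ((pivotSeq G0 lc).Adj hd x ↔ f x.2 j1) := by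
      intro x hx
      rw [hp2 x (hKRS x hx).1 (Or.inl (hKRS x hx).2)]
      have h0 : gAdj M n f hd x ↔ False := by
        rw [aux_gAdj_offrow (show hd.1 ≠ x.1 from fun h => (hKRS x hx).2 h.symm)]
        exact iff_false_intro (hgap hd.2 (show (j1:ℕ) < j1.val+2+2*s by omega)
          (show j1.val+2+2*s < (j2:ℕ) by omega) _)
      rw [aux_xor_congr h0 Iff.rfl, aux_xor_falsel]
    have hβ : ∀ x ∈ K, ((pivotSeq G0 lc).Adj v x ↔ f x.2 j2) := by
      intro x hx
      rw [hp1 v x hr (hKRS x hx).1 hvfresh (Or.inl (hKRS x hx).2),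
        aux_gAdj_offrow (show v.1 ≠ x.1 from fun h => (hKRS x hx).2 h.symm)]
      exact hsymf j2 x.2
    have hedge : (pivotSeq G0 lc).Adj hd v := by
      rw [hp2 v hr hvfresh]
      refine Or.inl ⟨⟨aux_col_ne (show j1.val+2+2*s ≠ (j2:ℕ) by omega), Or.inl ⟨?_, ?_⟩⟩, ?_⟩
      · rw [aux_pathsGraph_adj]
        exact ⟨rfl, Or.inl (show j1.val+2+2*s+1 = (j2:ℕ) by omega)⟩
      · exact hgap hd.2 (show (j1:ℕ) < j1.val+2+2*s by omega)
          (show j1.val+2+2*s < (j2:ℕ) by omega) _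
      · exact fun h => hnf (hfs _ _ h)
    have hdK : hd ∉ K := fun h => (hKRS hd h).2 rfl
    have hvK : v ∉ K := fun h => (hKRS v h).2 rfl
    refine ⟨lc ++ [(hd, v)], aux_validPivots_append _ _ _ hvalc ⟨hedge, trivial⟩, ?_⟩
    intro x hx y hy
    rw [aux_pivotSeq_append]
    have := aux_pat_pivot (α := fun j => f j j1) (β := fun j => f j j2)
      hedge hdK hvK
      (fun x' hx' y' hy' => hp1 x' y' (hKRS x' hx').1 (hKRS y' hy').1
        (Or.inl (hKRS x' hx').2) (Or.inl (hKRS y' hy').2)) hα hβ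
    exact this x hx y hy

end Moves
section MoveB

variable {M n : ℕ} {f : Fin n → Fin n → Prop} {RS : Fin M → Prop} {r : Fin M}
variable {K : Set (Fin M × Fin n)}

/-- Move B: chain across an even-length gap from `j1` to `j2`, then pivot against a fresh
vertex in column `j3`, available when `f j3 j1` and `f j3 j2` differ. -/
lemma aux_moveB (hfs : ∀ a b, f a b → f b a) (hr : RS r)
    {G0 : SimpleGraph (Fin M × Fin n)}
    (hreg : ∀ x y : Fin M × Fin n, RS x.1 → RS y.1 → (G0.Adj x y ↔ gAdj M n f x y))
    (hKRS : ∀ x ∈ K, RS x.1 ∧ x.1 ≠ r)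
    {j1 j2 j3 : Fin n} {v2r : Fin M} (hv2RS : RS v2r) (hv2r : v2r ≠ r)
    (hKv2 : ∀ x ∈ K, x.1 ≠ v2r)
    (hlt : j1.val < j2.val) (heven : (j2.val - j1.val) % 2 = 0)
    (hgap : ∀ l : Fin n, j1.val < l.val → l.val < j2.val → ∀ c', ¬ f l c')
    (hcond : ¬ (f j3 j1 ↔ f j3 j2)) :
    ∃ l, ValidPivots G0 l ∧ ∀ x ∈ K, ∀ y ∈ K, ((pivotSeq G0 l).Adj x y ↔
      gAdj M n (fun j l' => Xor' (f j l')
        (Tog (Xor' (f j j1) (f j j2)) (f j j3)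
             (Xor' (f l' j1) (f l' j2)) (f l' j3))) x y) := by
  classical
  have hsymf : ∀ (a b : Fin n), f a b ↔ f b a := fun a b => ⟨hfs a b, hfs b a⟩
  obtain ⟨s, hs⟩ : ∃ s, j1.val + 2 + 2*s = j2.val := ⟨(j2.val - j1.val - 2)/2, by omega⟩
  obtain ⟨lc, hvalc, hp1, hp2⟩ := aux_chain hfs hr hreg (j0 := j1.val) s
    (by omega) (fun c' h1 h2 c'' => hgap c' h1 (by omega) c'')
  set hd : Fin M × Fin n := (r, ⟨j1.val+2+2*s, by omega⟩) with hhd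
  have hcol : (⟨j1.val+2+2*s, by omega⟩ : Fin n) = j2 := Fin.ext hs
  set v2 : Fin M × Fin n := (v2r, j3) with hv2
  have hv2fresh : v2.1 ≠ r ∨ j1.val+2+2*s < v2.2.val := Or.inl hv2r
  have hα : ∀ x ∈ K, ((pivotSeq G0 lc).Adj hd x ↔ Xor' (f x.2 j1) (f x.2 j2)) := by
    intro x hx
    rw [hp2 x (hKRS x hx).1 (Or.inl (hKRS x hx).2)]
    have h0 : gAdj M n f hd x ↔ f x.2 j2 := by
      rw [aux_gAdj_offrow (show hd.1 ≠ x.1 from fun h => (hKRS x hx).2 h.symm)]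
      show f (⟨j1.val+2+2*s, by omega⟩ : Fin n) x.2 ↔ f x.2 j2
      rw [hcol]; exact hsymf j2 x.2
    rw [aux_xor_congr h0 Iff.rfl]
    exact aux_xor_comm
  have hβ : ∀ x ∈ K, ((pivotSeq G0 lc).Adj v2 x ↔ f x.2 j3) := by
    intro x hx
    rw [hp1 v2 x hv2RS (hKRS x hx).1 hv2fresh (Or.inl (hKRS x hx).2),
      aux_gAdj_offrow (show v2.1 ≠ x.1 from fun h => (hKv2 x hx) h.symm)]
    exact hsymf j3 x.2
  have hedge : (pivotSeq G0 lc).Adj hd v2 := by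
    rw [hp2 v2 hv2RS hv2fresh]
    have h0 : gAdj M n f hd v2 ↔ f j2 j3 := by
      rw [aux_gAdj_offrow (show hd.1 ≠ v2.1 from fun h => hv2r h.symm)]
      show f (⟨j1.val+2+2*s, by omega⟩ : Fin n) j3 ↔ f j2 j3
      rw [hcol]
    rw [aux_xor_congr h0 Iff.rfl, aux_xor_congr (hsymf j2 j3) Iff.rfl, aux_xor_not_iff]
    show ¬ (f j3 j2 ↔ f j3 (⟨j1.val, by omega⟩ : Fin n))
    tauto
  have hdK : hd ∉ K := fun h => (hKRS hd h).2 rfl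
  have hv2K : v2 ∉ K := fun h => (hKv2 v2 h) rfl
  refine ⟨lc ++ [(hd, v2)], aux_validPivots_append _ _ _ hvalc ⟨hedge, trivial⟩, ?_⟩
  intro x hx y hy
  rw [aux_pivotSeq_append]
  have := aux_pat_pivot (α := fun j => Xor' (f j j1) (f j j2)) (β := fun j => f j j3)
    hedge hdK hv2K
    (fun x' hx' y' hy' => hp1 x' y' (hKRS x' hx').1 (hKRS y' hy').1
      (Or.inl (hKRS x' hx').2) (Or.inl (hKRS y' hy').2)) hα hβ
  exact this x hx y hy

end MoveB
section PackageCor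

/-- The set of columns contained in a block. -/
def idxOf (M n : ℕ) (X : Set (Fin M × Fin n)) : Set (Fin n) := {j | column M n j ⊆ X}

variable {m n k : ℕ}

lemma aux_package_drop (hm : 1 ≤ m)
    {P : Set (Set (Fin (m+4) × Fin n))} (hP : IsCoarsening P (columnSet (m+4) n))
    (hPk : P.ncard = k)
    {F : Set (Set (Fin (m+4) × Fin n) × Set (Fin (m+4) × Fin n))}
    (l : List ((Fin (m+4) × Fin n) × (Fin (m+4) × Fin n)))
    (hval : ValidPivots (collFlip (pathsGraph (m+4) n) P F) l)
    (f2 : Fin n → Fin n → Prop)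
    (hreg : ∀ x y : Fin (m+4) × Fin n, x.1.val < m → y.1.val < m →
      ((pivotSeq (collFlip (pathsGraph (m+4) n) P F) l).Adj x y ↔ gAdj (m+4) n f2 x y))
    {X0 : Set (Fin (m+4) × Fin n)} (hX0 : X0 ∈ P)
    (htriv : ∀ j : Fin n, column (m+4) n j ⊆ X0 → ∀ l', ¬ f2 j l')
    (hcov0 : ∀ j j' : Fin n, f2 j j' → ∃ X ∈ P, column (m+4) n j ⊆ X)
    (hconst2 : ∀ X ∈ P, ∀ j j' : Fin n, column (m+4) n j ⊆ X → column (m+4) n j' ⊆ X →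
      ∀ l', f2 j l' ↔ f2 j' l')
    (hsymm2 : ∀ j j', f2 j j' → f2 j' j) :
    ∃ G' : SimpleGraph (Fin m × Fin n), IsKFlippedPaths (k-1) m n G' ∧
      IsPivotMinorOf G' (collFlip (pathsGraph (m+4) n) P F) := by
  classical
  refine aux_package hm hP l hval f2 hreg (idxOf (m+4) n '' (P \ {X0})) ?_ ?_ ?_ ?_ ?_ hsymm2
  · rintro c ⟨X, hX, rfl⟩
    obtain ⟨x, hx⟩ := hP.1.1 X hX.1
    exact ⟨x.2, aux_col_subset hP hX.1 hx⟩
  · rintro s ⟨X1, h1, rfl⟩ t ⟨X2, h2, rfl⟩ hne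
    have hX12 : X1 ≠ X2 := fun he => hne (by rw [he])
    refine Set.disjoint_left.mpr ?_
    intro j hj hj'
    exact hX12 (aux_block_eq hP h1.1 h2.1
      ((hj : column (m+4) n j ⊆ X1) (show ((⟨0, by omega⟩ : Fin (m+4)), j) ∈ column (m+4) n j from rfl))
      ((hj' : column (m+4) n j ⊆ X2) (show ((⟨0, by omega⟩ : Fin (m+4)), j) ∈ column (m+4) n j from rfl)))
  · calc (idxOf (m+4) n '' (P \ {X0})).ncard ≤ (P \ {X0}).ncard :=
          Set.ncard_image_le (Set.toFinite _)
      _ = P.ncard - 1 := Set.ncard_diff_singleton_of_mem hX0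
      _ ≤ k - 1 := by omega
  · intro j j' hf
    obtain ⟨X, hX, hsub⟩ := hcov0 j j' hf
    have hXX0 : X ≠ X0 := fun he => htriv j (he ▸ hsub) j' hf
    exact ⟨idxOf (m+4) n X, ⟨X, ⟨hX, hXX0⟩, rfl⟩, hsub⟩
  · rintro c ⟨X, hX, rfl⟩ j hj jj hjj l'
    exact hconst2 X hX.1 j jj hj hjj l'

lemma aux_package_merge (hm : 1 ≤ m) (hk : 2 ≤ k)
    {P : Set (Set (Fin (m+4) × Fin n))} (hP : IsCoarsening P (columnSet (m+4) n))
    (hPk : P.ncard = k)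
    {F : Set (Set (Fin (m+4) × Fin n) × Set (Fin (m+4) × Fin n))}
    (l : List ((Fin (m+4) × Fin n) × (Fin (m+4) × Fin n)))
    (hval : ValidPivots (collFlip (pathsGraph (m+4) n) P F) l)
    (f2 : Fin n → Fin n → Prop)
    (hreg : ∀ x y : Fin (m+4) × Fin n, x.1.val < m → y.1.val < m →
      ((pivotSeq (collFlip (pathsGraph (m+4) n) P F) l).Adj x y ↔ gAdj (m+4) n f2 x y))
    {X0 Z0 : Set (Fin (m+4) × Fin n)} (hX0 : X0 ∈ P) (hZ0 : Z0 ∈ P) (hXZ : X0 ≠ Z0)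
    (hcov0 : ∀ j j' : Fin n, f2 j j' → ∃ X ∈ P, column (m+4) n j ⊆ X)
    (hconst2 : ∀ X ∈ P, ∀ j j' : Fin n, column (m+4) n j ⊆ X → column (m+4) n j' ⊆ X →
      ∀ l', f2 j l' ↔ f2 j' l')
    (hconstm : ∀ j j' : Fin n,
      (column (m+4) n j ⊆ X0 ∨ column (m+4) n j ⊆ Z0) →
      (column (m+4) n j' ⊆ X0 ∨ column (m+4) n j' ⊆ Z0) →
      ∀ l', f2 j l' ↔ f2 j' l')
    (hsymm2 : ∀ j j', f2 j j' → f2 j' j) :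
    ∃ G' : SimpleGraph (Fin m × Fin n), IsKFlippedPaths (k-1) m n G' ∧
      IsPivotMinorOf G' (collFlip (pathsGraph (m+4) n) P F) := by
  classical
  have hpt : ∀ j : Fin n, ((⟨0, by omega⟩ : Fin (m+4)), j) ∈ column (m+4) n j := fun j => rfl
  have hblk : ∀ {X1 X2 : Set (Fin (m+4) × Fin n)}, X1 ∈ P → X2 ∈ P → ∀ {j : Fin n},
      column (m+4) n j ⊆ X1 → column (m+4) n j ⊆ X2 → X1 = X2 := by
    intro X1 X2 h1 h2 j hj hj'
    exact aux_block_eq hP h1 h2 (hj (hpt j)) (hj' (hpt j))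
  refine aux_package hm hP l hval f2 hreg
    ((idxOf (m+4) n '' (P \ {X0, Z0})) ∪ {idxOf (m+4) n X0 ∪ idxOf (m+4) n Z0})
    ?_ ?_ ?_ ?_ ?_ hsymm2
  · rintro c (⟨X, hX, rfl⟩ | hc)
    · obtain ⟨x, hx⟩ := hP.1.1 X hX.1
      exact ⟨x.2, aux_col_subset hP hX.1 hx⟩
    · rw [Set.mem_singleton_iff] at hc
      subst hc
      obtain ⟨x, hx⟩ := hP.1.1 X0 hX0
      exact ⟨x.2, Or.inl (aux_col_subset hP hX0 hx)⟩
  · rintro s hs t ht hne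
    refine Set.disjoint_left.mpr ?_
    intro j hj hj'
    rcases hs with ⟨X1, h1, rfl⟩ | hs
    · rcases ht with ⟨X2, h2, rfl⟩ | ht
      · exact (fun he => hne (by rw [he])) (hblk h1.1 h2.1 hj hj')
      · rw [Set.mem_singleton_iff] at ht; subst ht
        rcases hj' with hj' | hj'
        · exact h1.2 (Or.inl (hblk h1.1 hX0 hj hj'))
        · exact h1.2 (Or.inr (hblk h1.1 hZ0 hj hj'))
    · rw [Set.mem_singleton_iff] at hs; subst hs
      rcases ht with ⟨X2, h2, rfl⟩ | ht
      · rcases hj with hj | hj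
        · exact h2.2 (Or.inl (hblk h2.1 hX0 hj' hj))
        · exact h2.2 (Or.inr (hblk h2.1 hZ0 hj' hj))
      · rw [Set.mem_singleton_iff] at ht; subst ht
        exact hne rfl
  · rw [Set.union_singleton]
    calc (insert (idxOf (m+4) n X0 ∪ idxOf (m+4) n Z0) (idxOf (m+4) n '' (P \ {X0, Z0}))).ncard
        ≤ (idxOf (m+4) n '' (P \ {X0, Z0})).ncard + 1 := Set.ncard_insert_le _ _
      _ ≤ (P \ {X0, Z0}).ncard + 1 := by
          have := Set.ncard_image_le (f := idxOf (m+4) n) (s := P \ {X0, Z0}) (Set.toFinite _)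
          omega
      _ ≤ k - 1 := by
          have h1 : (P \ {X0, Z0}).ncard = P.ncard - ({X0, Z0} : Set _).ncard :=
            Set.ncard_diff (by rintro x (rfl | rfl); exacts [hX0, (by simpa using hZ0)]) (Set.toFinite _)
          have h2 : ({X0, Z0} : Set (Set (Fin (m+4) × Fin n))).ncard = 2 := Set.ncard_pair hXZ
          omega
  · intro j j' hf
    obtain ⟨X, hX, hsub⟩ := hcov0 j j' hf
    by_cases hx : X = X0
    · exact ⟨idxOf (m+4) n X0 ∪ idxOf (m+4) n Z0, Or.inr rfl, Or.inl (hx ▸ hsub)⟩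
    by_cases hz : X = Z0
    · exact ⟨idxOf (m+4) n X0 ∪ idxOf (m+4) n Z0, Or.inr rfl, Or.inr (hz ▸ hsub)⟩
    exact ⟨idxOf (m+4) n X, Or.inl ⟨X, ⟨hX, by simp [hx, hz]⟩, rfl⟩, hsub⟩
  · rintro c (⟨X, hX, rfl⟩ | hc) j hj jj hjj l'
    · exact hconst2 X hX.1 j jj hj hjj l'
    · rw [Set.mem_singleton_iff] at hc; subst hc
      exact hconstm j jj hj hjj l'

end PackageCor
section Gap

/-- Existence of a "gap pair": two columns in distinct blocks with all strictly
intermediate columns uncovered. -/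
lemma aux_gap {M n : ℕ} (hM : 0 < M) {P : Set (Set (Fin M × Fin n))}
    (hP : IsCoarsening P (columnSet M n))
    {X Z : Set (Fin M × Fin n)} (hX : X ∈ P) (hZ : Z ∈ P) (hXZ : X ≠ Z) :
    ∃ (j1 j2 : Fin n) (X0 Z0 : Set (Fin M × Fin n)), X0 ∈ P ∧ Z0 ∈ P ∧ X0 ≠ Z0 ∧
      j1.val < j2.val ∧ column M n j1 ⊆ X0 ∧ column M n j2 ⊆ Z0 ∧
      ∀ l : Fin n, j1.val < l.val → l.val < j2.val → ∀ W ∈ P, ¬ column M n l ⊆ W := by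
  classical
  set D : Set ℕ := {d | ∃ (j1 j2 : Fin n) (X0 Z0 : Set (Fin M × Fin n)), X0 ∈ P ∧ Z0 ∈ P ∧
    X0 ≠ Z0 ∧ j1.val < j2.val ∧ column M n j1 ⊆ X0 ∧ column M n j2 ⊆ Z0 ∧
    d = j2.val - j1.val} with hD
  have hpt : ∀ j : Fin n, ((⟨0, hM⟩ : Fin M), j) ∈ column M n j := fun j => rfl
  have hne : D.Nonempty := by
    obtain ⟨x, hx⟩ := hP.1.1 X hX
    obtain ⟨z, hz⟩ := hP.1.1 Z hZ
    have hsx := aux_col_subset hP hX hx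
    have hsz := aux_col_subset hP hZ hz
    have hxz : x.2 ≠ z.2 := by
      intro he
      exact hXZ (aux_block_eq hP hX hZ (hsx (hpt x.2)) (by rw [he]; exact hsz (hpt z.2)))
    rcases lt_or_gt_of_ne (fun h => hxz (Fin.ext h) : x.2.val ≠ z.2.val) with h | h
    · exact ⟨z.2.val - x.2.val, x.2, z.2, X, Z, hX, hZ, hXZ, h, hsx, hsz, rfl⟩
    · exact ⟨x.2.val - z.2.val, z.2, x.2, Z, X, hZ, hX, hXZ.symm, h, hsz, hsx, rfl⟩
  obtain ⟨j1, j2, X0, Z0, hX0, hZ0, hXZ0, hlt, hs1, hs2, hd⟩ := Nat.sInf_mem hne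
  refine ⟨j1, j2, X0, Z0, hX0, hZ0, hXZ0, hlt, hs1, hs2, ?_⟩
  intro l h1 h2 W hW hsubW
  by_cases hWX : W = X0
  · subst hWX
    have : j2.val - l.val ∈ D := ⟨l, j2, W, Z0, hW, hZ0, hXZ0, h2, hsubW, hs2, rfl⟩
    have := Nat.sInf_le this
    omega
  · have : l.val - j1.val ∈ D := ⟨j1, l, X0, W, hX0, hW, fun he => hWX he.symm, h1, hs1, hsubW, rfl⟩
    have := Nat.sInf_le this
    omega

end Gap
section F2Helpers

lemma aux_fin_ne {M : ℕ} {a b : Fin M} (h : (a : ℕ) ≠ (b : ℕ)) : a ≠ b :=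
  fun he => h (congrArg Fin.val he)

lemma aux_f2_congr {g g' pa pa' qa qa' pb qb : Prop}
    (hg : g ↔ g') (hp : pa ↔ pa') (hq : qa ↔ qa') :
    Xor' g (Tog pa qa pb qb) ↔ Xor' g' (Tog pa' qa' pb qb) :=
  aux_xor_congr hg (aux_tog_congr hp hq Iff.rfl Iff.rfl)

lemma aux_f2_parts {g pa qa pb qb : Prop} (h : Xor' g (Tog pa qa pb qb)) :
    g ∨ pa ∨ qa :=
  (aux_xor_or h).imp id aux_tog_or

lemma aux_xor_cancel' {a b : Prop} : Xor' a (Xor' a b) ↔ b := by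
  simp only [Xor', xor_def]; by_cases a <;> by_cases b <;> tauto

lemma aux_xor_cancel'' {a b : Prop} : Xor' b (Xor' a b) ↔ a := by
  simp only [Xor', xor_def]; by_cases a <;> by_cases b <;> tauto

end F2Helpers
section Keys

/-- The column relation after a move of type A. -/
def F2A {n : ℕ} (g : Fin n → Fin n → Prop) (a b : Fin n) : Fin n → Fin n → Prop :=
  fun j l => Xor' (g j l) (Tog (g j a) (g j b) (g l a) (g l b))

/-- The column relation after a move of type B. -/
def F2B {n : ℕ} (g : Fin n → Fin n → Prop) (a b c : Fin n) : Fin n → Fin n → Prop :=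
  fun j l => Xor' (g j l) (Tog (Xor' (g j a) (g j b)) (g j c) (Xor' (g l a) (g l b)) (g l c))

/-- The column relation after the preliminary pivot in the two-move case. -/
def F1C {n : ℕ} (g : Fin n → Fin n → Prop) (c d : Fin n) : Fin n → Fin n → Prop :=
  fun j l => Xor' (g j l) (Tog (g c j) (g d j) (g c l) (g d l))

variable {n : ℕ} {g : Fin n → Fin n → Prop}

lemma aux_keyA (hgs : ∀ a b, g a b ↔ g b a) {j1 j2 : Fin n}
    (hd1 : g j1 j1) (hd2 : g j2 j2) (hn12 : ¬ g j1 j2) {j : Fin n}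
    (hj : (∀ l, g j l ↔ g j1 l) ∨ (∀ l, g j l ↔ g j2 l)) (l' : Fin n) :
    F2A g j1 j2 j l' ↔ Xor' (g l' j1) (g l' j2) := by
  rcases hj with hj | hj
  · have e1 : g j j1 ↔ True := iff_true_intro ((hj j1).mpr hd1)
    have e2 : g j j2 ↔ False := iff_false_intro (fun h => hn12 ((hj j2).mp h))
    have et : Tog (g j j1) (g j j2) (g l' j1) (g l' j2) ↔ g l' j2 := by
      rw [e1, e2]; exact aux_tog_TF
    exact aux_xor_congr ((hj l').trans (hgs j1 l')) et
  · have e1 : g j j1 ↔ False :=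
      iff_false_intro (fun h => hn12 ((hgs j2 j1).mp ((hj j1).mp h)))
    have e2 : g j j2 ↔ True := iff_true_intro ((hj j2).mpr hd2)
    have et : Tog (g j j1) (g j j2) (g l' j1) (g l' j2) ↔ g l' j1 := by
      rw [e1, e2]; exact aux_tog_FT
    exact (aux_xor_congr ((hj l').trans (hgs j2 l')) et).trans aux_xor_comm

lemma aux_keyB1 (hgs : ∀ a b, g a b ↔ g b a) {j1 j2 : Fin n}
    (hd1 : g j1 j1) (hd2 : g j2 j2) (hn12 : ¬ g j1 j2) {j : Fin n}
    (hj : (∀ l, g j l ↔ g j1 l) ∨ (∀ l, g j l ↔ g j2 l)) (l' : Fin n) :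
    F2B g j1 j2 j2 j l' ↔ Xor' (g l' j1) (g l' j2) := by
  rcases hj with hj | hj
  · have e1 : g j j1 ↔ True := iff_true_intro ((hj j1).mpr hd1)
    have e2 : g j j2 ↔ False := iff_false_intro (fun h => hn12 ((hj j2).mp h))
    have ep : Xor' (g j j1) (g j j2) ↔ True := by
      rw [e1, e2, aux_xor_falser]
    have et : Tog (Xor' (g j j1) (g j j2)) (g j j2) (Xor' (g l' j1) (g l' j2)) (g l' j2) ↔
        g l' j2 := by rw [ep, e2]; exact aux_tog_TF
    exact aux_xor_congr ((hj l').trans (hgs j1 l')) et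
  · have e1 : g j j1 ↔ False :=
      iff_false_intro (fun h => hn12 ((hgs j2 j1).mp ((hj j1).mp h)))
    have e2 : g j j2 ↔ True := iff_true_intro ((hj j2).mpr hd2)
    have ep : Xor' (g j j1) (g j j2) ↔ True := by
      rw [e1, e2, aux_xor_falsel]
    have et : Tog (Xor' (g j j1) (g j j2)) (g j j2) (Xor' (g l' j1) (g l' j2)) (g l' j2) ↔
        g l' j1 := by rw [ep, e2, aux_tog_TT]; exact aux_xor_cancel
    exact (aux_xor_congr ((hj l').trans (hgs j2 l')) et).trans aux_xor_comm

lemma aux_keyB2 (hgs : ∀ a b, g a b ↔ g b a) {j1 j2 j3 : Fin n}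
    (hd1 : g j1 j1) (hd2 : g j2 j2) (ht12 : g j1 j2)
    (h31 : g j3 j1) (h32 : ¬ g j3 j2) {j : Fin n}
    (hj : (∀ l, g j l ↔ g j1 l) ∨ (∀ l, g j l ↔ g j2 l)) (l' : Fin n) :
    F2B g j1 j2 j3 j l' ↔ g l' j2 := by
  rcases hj with hj | hj
  · have e1 : g j j1 ↔ True := iff_true_intro ((hj j1).mpr hd1)
    have e2 : g j j2 ↔ True := iff_true_intro ((hj j2).mpr ht12)
    have e3 : g j j3 ↔ True := iff_true_intro ((hj j3).mpr ((hgs j3 j1).mp h31))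
    have ep : Xor' (g j j1) (g j j2) ↔ False := by
      rw [e1, e2]; exact aux_xor_self
    have et : Tog (Xor' (g j j1) (g j j2)) (g j j3) (Xor' (g l' j1) (g l' j2)) (g l' j3) ↔
        Xor' (g l' j1) (g l' j2) := by rw [ep, e3]; exact aux_tog_FT
    refine (aux_xor_congr ((hj l').trans (hgs j1 l')) et).trans ?_
    exact aux_xor_cancel'
  · have e1 : g j j1 ↔ True := iff_true_intro ((hj j1).mpr ((hgs j1 j2).mp ht12))
    have e2 : g j j2 ↔ True := iff_true_intro ((hj j2).mpr hd2)
    have e3 : g j j3 ↔ False := iff_false_intro (fun h => h32 ((hgs j2 j3).mp ((hj j3).mp h)))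
    have ep : Xor' (g j j1) (g j j2) ↔ False := by
      rw [e1, e2]; exact aux_xor_self
    have et : Tog (Xor' (g j j1) (g j j2)) (g j j3) (Xor' (g l' j1) (g l' j2)) (g l' j3) ↔
        False := by rw [ep, e3]; exact aux_tog_00l
    refine (aux_xor_congr ((hj l').trans (hgs j2 l')) et).trans ?_
    rw [aux_xor_falser]

lemma aux_keyB2' (hgs : ∀ a b, g a b ↔ g b a) {j1 j2 j3 : Fin n}
    (hd1 : g j1 j1) (hd2 : g j2 j2) (ht12 : g j1 j2)
    (h31 : ¬ g j3 j1) (h32 : g j3 j2) {j : Fin n}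
    (hj : (∀ l, g j l ↔ g j1 l) ∨ (∀ l, g j l ↔ g j2 l)) (l' : Fin n) :
    F2B g j1 j2 j3 j l' ↔ g l' j1 := by
  rcases hj with hj | hj
  · have e1 : g j j1 ↔ True := iff_true_intro ((hj j1).mpr hd1)
    have e2 : g j j2 ↔ True := iff_true_intro ((hj j2).mpr ht12)
    have e3 : g j j3 ↔ False := iff_false_intro (fun h => h31 ((hgs j1 j3).mp ((hj j3).mp h)))
    have ep : Xor' (g j j1) (g j j2) ↔ False := by
      rw [e1, e2]; exact aux_xor_self
    have et : Tog (Xor' (g j j1) (g j j2)) (g j j3) (Xor' (g l' j1) (g l' j2)) (g l' j3) ↔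
        False := by rw [ep, e3]; exact aux_tog_00l
    refine (aux_xor_congr ((hj l').trans (hgs j1 l')) et).trans ?_
    rw [aux_xor_falser]
  · have e1 : g j j1 ↔ True := iff_true_intro ((hj j1).mpr ((hgs j1 j2).mp ht12))
    have e2 : g j j2 ↔ True := iff_true_intro ((hj j2).mpr hd2)
    have e3 : g j j3 ↔ True := iff_true_intro ((hj j3).mpr ((hgs j3 j2).mp h32))
    have ep : Xor' (g j j1) (g j j2) ↔ False := by
      rw [e1, e2]; exact aux_xor_self
    have et : Tog (Xor' (g j j1) (g j j2)) (g j j3) (Xor' (g l' j1) (g l' j2)) (g l' j3) ↔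
        Xor' (g l' j1) (g l' j2) := by rw [ep, e3]; exact aux_tog_FT
    refine (aux_xor_congr ((hj l').trans (hgs j2 l')) et).trans ?_
    exact aux_xor_cancel''

end Keys
section Obls

variable {M n : ℕ} {P : Set (Set (Fin M × Fin n))} {g : Fin n → Fin n → Prop}

lemma aux_keyC3 (hgs : ∀ a b, g a b ↔ g b a) {j1 j2 : Fin n}
    (hnd : ¬ g j1 j1) (ht : g j1 j2) {j : Fin n}
    (hj : ∀ l, g j l ↔ g j1 l) (l' : Fin n) : ¬ F2A g j1 j2 j l' := by
  have e1 : g j j1 ↔ False := iff_false_intro (fun h => hnd ((hj j1).mp h))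
  have e2 : g j j2 ↔ True := iff_true_intro ((hj j2).mpr ht)
  have et : Tog (g j j1) (g j j2) (g l' j1) (g l' j2) ↔ g l' j1 := by
    rw [e1, e2]; exact aux_tog_FT
  intro h
  have := (aux_xor_congr ((hj l').trans (hgs j1 l')) et).mp h
  exact (aux_xor_self).mp this

lemma aux_oblA_const
    (hgconst : ∀ X ∈ P, ∀ j j' : Fin n, column M n j ⊆ X → column M n j' ⊆ X →
      ∀ l', (g j l' ↔ g j' l')) (a b : Fin n) :
    ∀ X ∈ P, ∀ j j' : Fin n, column M n j ⊆ X → column M n j' ⊆ X →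
      ∀ l', (F2A g a b j l' ↔ F2A g a b j' l') :=
  fun X hX j j' h1 h2 l' => aux_f2_congr (hgconst X hX j j' h1 h2 l')
    (hgconst X hX j j' h1 h2 a) (hgconst X hX j j' h1 h2 b)

lemma aux_oblA_cov (hgcov : ∀ j l : Fin n, g j l → ∃ X ∈ P, column M n j ⊆ X) (a b : Fin n) :
    ∀ j j' : Fin n, F2A g a b j j' → ∃ X ∈ P, column M n j ⊆ X := by
  intro j j' h
  rcases aux_f2_parts h with h | h | h
  exacts [hgcov _ _ h, hgcov _ _ h, hgcov _ _ h]

lemma aux_oblA_symm (hgs : ∀ a' b', g a' b' ↔ g b' a') (a b : Fin n) :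
    ∀ j j', F2A g a b j j' → F2A g a b j' j :=
  fun j j' h => (aux_xor_congr (hgs j j') aux_tog_comm).mp h

lemma aux_oblB_const
    (hgconst : ∀ X ∈ P, ∀ j j' : Fin n, column M n j ⊆ X → column M n j' ⊆ X →
      ∀ l', (g j l' ↔ g j' l')) (a b c : Fin n) :
    ∀ X ∈ P, ∀ j j' : Fin n, column M n j ⊆ X → column M n j' ⊆ X →
      ∀ l', (F2B g a b c j l' ↔ F2B g a b c j' l') :=
  fun X hX j j' h1 h2 l' => aux_xor_congr (hgconst X hX j j' h1 h2 l')
    (aux_tog_congr (aux_xor_congr (hgconst X hX j j' h1 h2 a) (hgconst X hX j j' h1 h2 b))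
      (hgconst X hX j j' h1 h2 c) Iff.rfl Iff.rfl)

lemma aux_oblB_cov (hgcov : ∀ j l : Fin n, g j l → ∃ X ∈ P, column M n j ⊆ X) (a b c : Fin n) :
    ∀ j j' : Fin n, F2B g a b c j j' → ∃ X ∈ P, column M n j ⊆ X := by
  intro j j' h
  rcases aux_f2_parts h with h | h | h
  · exact hgcov _ _ h
  · rcases aux_xor_or h with h | h
    exacts [hgcov _ _ h, hgcov _ _ h]
  · exact hgcov _ _ h

lemma aux_oblB_symm (hgs : ∀ a' b', g a' b' ↔ g b' a') (a b c : Fin n) :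
    ∀ j j', F2B g a b c j j' → F2B g a b c j' j :=
  fun j j' h => (aux_xor_congr (hgs j j') aux_tog_comm).mp h

lemma aux_oblC_symm (hgs : ∀ a' b', g a' b' ↔ g b' a') (c d : Fin n) :
    ∀ a' b', F1C g c d a' b' ↔ F1C g c d b' a' :=
  fun a' b' => aux_xor_congr (hgs a' b') aux_tog_comm

lemma aux_oblC_const (hgs : ∀ a' b', g a' b' ↔ g b' a')
    (hgconst : ∀ X ∈ P, ∀ j j' : Fin n, column M n j ⊆ X → column M n j' ⊆ X →
      ∀ l', (g j l' ↔ g j' l')) (c d : Fin n) :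
    ∀ X ∈ P, ∀ j j' : Fin n, column M n j ⊆ X → column M n j' ⊆ X →
      ∀ l', (F1C g c d j l' ↔ F1C g c d j' l') := by
  intro X hX j j' h1 h2 l'
  have h2nd : ∀ e : Fin n, g e j ↔ g e j' :=
    fun e => (hgs e j).trans ((hgconst X hX j j' h1 h2 e).trans (hgs j' e))
  exact aux_f2_congr (hgconst X hX j j' h1 h2 l') (h2nd c) (h2nd d)

lemma aux_oblC_cov (hgs : ∀ a' b', g a' b' ↔ g b' a')
    (hgcov : ∀ j l : Fin n, g j l → ∃ X ∈ P, column M n j ⊆ X) (c d : Fin n) :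
    ∀ j j' : Fin n, F1C g c d j j' → ∃ X ∈ P, column M n j ⊆ X := by
  intro j j' h
  rcases aux_f2_parts h with h | h | h
  · exact hgcov _ _ h
  · exact hgcov _ _ ((hgs c j).mp h)
  · exact hgcov _ _ ((hgs d j).mp h)

lemma aux_oblC_null (hgs : ∀ a' b', g a' b' ↔ g b' a') (c d : Fin n) {l : Fin n}
    (hl : ∀ c', ¬ g l c') : ∀ c', ¬ F1C g c d l c' := by
  intro c' h
  rcases aux_f2_parts h with h | h | h
  · exact hl _ h
  · exact hl _ ((hgs c l).mp h)
  · exact hl _ ((hgs d l).mp h)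

lemma aux_oblC_diag (c d : Fin n) (e : Fin n) : F1C g c d e e ↔ g e e := by
  show Xor' (g e e) (Tog (g c e) (g d e) (g c e) (g d e)) ↔ g e e
  rw [aux_xor_congr Iff.rfl aux_tog_self, aux_xor_falser]

end Obls
/-! ## Statement 12 -/
theorem stmt12 (m n : ℕ) (hm : 1 ≤ m) (hn : 1 ≤ n) (k : ℕ) (hk : 2 ≤ k)
    (P : Set (Set (Fin (m + 4) × Fin n))) (hP : IsCoarsening P (columnSet (m + 4) n))
    (hPk : P.ncard = k)
    (F : Set (Set (Fin (m + 4) × Fin n) × Set (Fin (m + 4) × Fin n)))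
    (hFP : F ⊆ P ×ˢ P) (hFsymm : SymmRelSet F) :
    ∃ G' : SimpleGraph (Fin m × Fin n), IsKFlippedPaths (k - 1) m n G' ∧
      IsPivotMinorOf G' (collFlip (pathsGraph (m + 4) n) P F) := by
  classical
  set f : Fin n → Fin n → Prop := CrelOf (m+4) n P F with hfdef
  have hM0 : (0:ℕ) < m+4 := by omega
  have hregH : ∀ x y : Fin (m+4) × Fin n,
      (collFlip (pathsGraph (m+4) n) P F).Adj x y ↔ gAdj (m+4) n f x y :=
    fun x y => aux_collFlip_gAdj hP hFP hFsymm x y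
  have hfs : ∀ a b, f a b → f b a := fun a b h => aux_crel_symm hFsymm h
  have hsymf : ∀ a b, f a b ↔ f b a := fun a b => ⟨hfs a b, hfs b a⟩
  have hconstE : ∀ X ∈ P, ∀ j j' : Fin n, column (m+4) n j ⊆ X → column (m+4) n j' ⊆ X →
      ∀ l', (f j l' ↔ f j' l') := fun X hX j j' h1 h2 l' => aux_crel_const hM0 hP hX h1 h2 l'
  have hcovE : ∀ j l : Fin n, f j l → ∃ X ∈ P, column (m+4) n j ⊆ X :=
    fun j l h => aux_crel_cov h
  set K : Set (Fin (m+4) × Fin n) := {x | x.1.val < m} with hK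
  set r0 : Fin (m+4) := ⟨m, by omega⟩ with hr0
  by_cases hC1 : ∃ X ∈ P, ∀ j : Fin n, column (m+4) n j ⊆ X → ∀ l', ¬ f j l'
  · -- a trivial block: drop it, no pivots
    obtain ⟨X0, hX0, htriv⟩ := hC1
    exact aux_package_drop hm hP hPk [] trivial f (fun x y _ _ => hregH x y) hX0 htriv
      (fun j j' h => hcovE j j' h) (fun X hX j j' h1 h2 l' => hconstE X hX j j' h1 h2 l') hfs
  by_cases hC2 : ∃ X ∈ P, ∃ Z ∈ P, X ≠ Z ∧ ∃ j1 j2 : Fin n,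
      column (m+4) n j1 ⊆ X ∧ column (m+4) n j2 ⊆ Z ∧ ∀ l', (f l' j1 ↔ f l' j2)
  · -- a mergeable pair: merge, no pivots
    obtain ⟨X0, hX0, Z0, hZ0, hXZ, j1, j2, hs1, hs2, hmg⟩ := hC2
    have key : ∀ j : Fin n, (column (m+4) n j ⊆ X0 ∨ column (m+4) n j ⊆ Z0) →
        ∀ l', (f j l' ↔ f j1 l') := by
      rintro j (hj | hj) l'
      · exact hconstE X0 hX0 j j1 hj hs1 l'
      · exact (hconstE Z0 hZ0 j j2 hj hs2 l').trans
          ((hsymf j2 l').trans (((hmg l').symm).trans (hsymf l' j1)))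
    exact aux_package_merge hm hk hP hPk [] trivial f (fun x y _ _ => hregH x y) hX0 hZ0 hXZ
      (fun j j' h => hcovE j j' h) (fun X hX j j' h1 h2 l' => hconstE X hX j j' h1 h2 l')
      (fun j j' hj hj' l' => (key j hj l').trans (key j' hj' l').symm) hfs
  by_cases hC3 : ∃ j1 j2 : Fin n, f j1 j2 ∧ ¬ f j1 j1
  · -- one pivot trivialises a block
    obtain ⟨j1, j2, hf12, hnd⟩ := hC3
    obtain ⟨X0, hX0, hsub1⟩ := hcovE j1 j2 hf12
    set u : Fin (m+4) × Fin n := (r0, j1) with hu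
    set v : Fin (m+4) × Fin n := ((⟨m+1, by omega⟩ : Fin (m+4)), j2) with hv
    have hedge : (collFlip (pathsGraph (m+4) n) P F).Adj u v := by
      rw [hregH, aux_gAdj_offrow (aux_fin_ne (show (m:ℕ) ≠ m+1 by omega))]
      exact hf12
    have huK : u ∉ K := fun h => (show ¬ ((m:ℕ) < m) by omega) h
    have hvK : v ∉ K := fun h => (show ¬ ((m:ℕ)+1 < m) by omega) h
    have hα : ∀ x ∈ K, ((collFlip (pathsGraph (m+4) n) P F).Adj u x ↔ f x.2 j1) := by
      intro x hx
      rw [hregH, aux_gAdj_offrow (aux_fin_ne (show (m:ℕ) ≠ (x.1:ℕ) by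
        have : (x.1:ℕ) < m := hx; omega))]
      exact hsymf j1 x.2
    have hβ : ∀ x ∈ K, ((collFlip (pathsGraph (m+4) n) P F).Adj v x ↔ f x.2 j2) := by
      intro x hx
      rw [hregH, aux_gAdj_offrow (aux_fin_ne (show (m:ℕ)+1 ≠ (x.1:ℕ) by
        have : (x.1:ℕ) < m := hx; omega))]
      exact hsymf j2 x.2
    have hpp := aux_pat_pivot (α := fun j => f j j1) (β := fun j => f j j2)
      hedge huK hvK (fun x _ y _ => hregH x y) hα hβ
    refine aux_package_drop hm hP hPk [(u, v)] ⟨hedge, trivial⟩ (F2A f j1 j2)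
      (fun x y hx hy => hpp x hx y hy) hX0 ?_
      (aux_oblA_cov hcovE j1 j2) (aux_oblA_const hconstE j1 j2) (aux_oblA_symm hsymf j1 j2)
    exact fun j hj l' => aux_keyC3 hsymf hnd hf12 (fun l => hconstE X0 hX0 j j1 hj hsub1 l) l'
  -- main case: all diagonal, find a gap pair
  push_neg at hC1 hC3
  have hdiagblk : ∀ X ∈ P, ∀ jc : Fin n, column (m+4) n jc ⊆ X → f jc jc := by
    intro X hX jc hjc
    obtain ⟨ja, hja, la, hfa⟩ := hC1 X hX
    have h0 : f ja ja := hC3 ja la hfa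
    have h1 : f jc ja := (hconstE X hX jc ja hjc hja ja).mpr h0
    have h2 : f ja jc := hfs _ _ h1
    exact (hconstE X hX jc ja hjc hja jc).mpr h2
  obtain ⟨Xa, hXa, Za, hZa, hXZa⟩ :=
    (Set.one_lt_ncard (Set.toFinite P)).mp (by rw [hPk]; omega)
  obtain ⟨j1, j2, X0, Z0, hX0, hZ0, hXZ0, hlt, hsub1, hsub2, hgapU⟩ :=
    aux_gap hM0 hP hXa hZa hXZa
  have hgap' : ∀ l : Fin n, j1.val < l.val → l.val < j2.val → ∀ c', ¬ f l c' := by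
    intro l h1 h2 c' hf
    obtain ⟨X, hX, hs⟩ := hcovE l c' hf
    exact hgapU l h1 h2 X hX hs
  have hd1 : f j1 j1 := hdiagblk X0 hX0 j1 hsub1
  have hd2 : f j2 j2 := hdiagblk Z0 hZ0 j2 hsub2
  have hdisj : ∀ j : Fin n, (column (m+4) n j ⊆ X0 ∨ column (m+4) n j ⊆ Z0) →
      ((∀ l, f j l ↔ f j1 l) ∨ (∀ l, f j l ↔ f j2 l)) :=
    fun j hj => hj.imp (fun h l => hconstE X0 hX0 j j1 h hsub1 l)
      (fun h l => hconstE Z0 hZ0 j j2 h hsub2 l)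
  have hKRS : ∀ x ∈ K, (fun _ : Fin (m+4) => True) x.1 ∧ x.1 ≠ r0 := by
    intro x hx
    refine ⟨trivial, fun he => ?_⟩
    have h1 : (x.1:ℕ) < m := hx
    have h2 : (x.1:ℕ) = m := congrArg Fin.val he
    omega
  by_cases hf12 : f j1 j2
  · -- related gap pair
    by_cases hj3 : ∃ j3 : Fin n, ¬ (f j3 j1 ↔ f j3 j2)
    · obtain ⟨j3, hcond⟩ := hj3
      by_cases hpar : (j2.val - j1.val) % 2 = 0
      · -- move B with discriminator j3
        obtain ⟨l, hval, hadj⟩ := aux_moveB (RS := fun _ => True) (r := r0) hfs trivial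
          (fun x y _ _ => hregH x y) hKRS (v2r := (⟨m+1, by omega⟩ : Fin (m+4))) trivial
          (aux_fin_ne (show (m:ℕ)+1 ≠ m by omega))
          (fun x hx => aux_fin_ne (show (x.1:ℕ) ≠ m+1 by
            have : (x.1:ℕ) < m := hx; omega))
          hlt hpar hgap' hcond
        refine aux_package_merge hm hk hP hPk l hval (F2B f j1 j2 j3)
          (fun x y hx hy => hadj x hx y hy) hX0 hZ0 hXZ0
          (aux_oblB_cov hcovE j1 j2 j3) (aux_oblB_const hconstE j1 j2 j3) ?_
          (aux_oblB_symm hsymf j1 j2 j3)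
        by_cases h31 : f j3 j1
        · have h32 : ¬ f j3 j2 := fun h => hcond ⟨fun _ => h, fun _ => h31⟩
          have key := fun j hj l' => aux_keyB2 hsymf hd1 hd2 hf12 h31 h32 (hdisj j hj) l'
          exact fun j j' hj hj' l' => (key j hj l').trans (key j' hj' l').symm
        · have h32 : f j3 j2 := by
            by_contra h32
            exact hcond ⟨fun h => absurd h h31, fun h => absurd h h32⟩
          have key := fun j hj l' => aux_keyB2' hsymf hd1 hd2 hf12 h31 h32 (hdisj j hj) l'
          exact fun j j' hj hj' l' => (key j hj l').trans (key j' hj' l').symm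
      · -- odd distance: preliminary pivot, then move A
        have hpar' : (j2.val - j1.val) % 2 = 1 := by omega
        obtain ⟨jA, hjAeq, hfA⟩ : ∃ jA : Fin n, (jA = j1 ∨ jA = j2) ∧ f j3 jA := by
          by_cases h31 : f j3 j1
          · exact ⟨j1, Or.inl rfl, h31⟩
          · refine ⟨j2, Or.inr rfl, ?_⟩
            by_contra h32
            exact hcond ⟨fun h => absurd h h31, fun h => absurd h h32⟩
        set u1 : Fin (m+4) × Fin n := ((⟨m+1, by omega⟩ : Fin (m+4)), j3) with hu1
        set v1 : Fin (m+4) × Fin n := ((⟨m+2, by omega⟩ : Fin (m+4)), jA) with hv1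
        set K1 : Set (Fin (m+4) × Fin n) := {x | x.1.val ≠ m+1 ∧ x.1.val ≠ m+2} with hK1
        have hedge1 : (collFlip (pathsGraph (m+4) n) P F).Adj u1 v1 := by
          rw [hregH, aux_gAdj_offrow (aux_fin_ne (show (m:ℕ)+1 ≠ m+2 by omega))]
          exact hfA
        have hα1 : ∀ x ∈ K1, ((collFlip (pathsGraph (m+4) n) P F).Adj u1 x ↔ f j3 x.2) := by
          intro x hx
          rw [hregH, aux_gAdj_offrow (aux_fin_ne (fun he => hx.1 he.symm))]
        have hβ1 : ∀ x ∈ K1, ((collFlip (pathsGraph (m+4) n) P F).Adj v1 x ↔ f jA x.2) := by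
          intro x hx
          rw [hregH, aux_gAdj_offrow (aux_fin_ne (fun he => hx.2 he.symm))]
        have hpp1 := aux_pat_pivot (α := fun j => f j3 j) (β := fun j => f jA j)
          hedge1 (fun h => h.1 rfl) (fun h => h.2 rfl) (fun x _ y _ => hregH x y) hα1 hβ1
        -- properties of f1
        have hsymf1 := aux_oblC_symm hsymf j3 jA
        have hfs1 : ∀ a b, F1C f j3 jA a b → F1C f j3 jA b a :=
          fun a b h => (hsymf1 a b).mp h
        have hconst1 := aux_oblC_const hsymf hconstE j3 jA
        have hcov1 := aux_oblC_cov hsymf hcovE j3 jA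
        have hd1' : F1C f j3 jA j1 j1 := (aux_oblC_diag j3 jA j1).mpr hd1
        have hd2' : F1C f j3 jA j2 j2 := (aux_oblC_diag j3 jA j2).mpr hd2
        have hn12' : ¬ F1C f j3 jA j1 j2 := by
          rcases hjAeq with he | he
          · have h32 : ¬ f j3 j2 := fun h => hcond ⟨fun _ => h, fun _ => he ▸ hfA⟩
            intro hcontra
            have et : Tog (f j3 j1) (f jA j1) (f j3 j2) (f jA j2) ↔ f j1 j2 := by
              rw [he, iff_true_intro (he ▸ hfA : f j3 j1), iff_true_intro hd1,
                iff_false_intro h32, aux_tog_TT]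
              exact aux_xor_falsel
            have := (aux_xor_congr Iff.rfl et).mp hcontra
            exact aux_xor_self.mp this
          · have h31 : ¬ f j3 j1 := fun h => hcond ⟨fun _ => he ▸ hfA, fun _ => h⟩
            intro hcontra
            have et : Tog (f j3 j1) (f jA j1) (f j3 j2) (f jA j2) ↔ f j3 j2 := by
              rw [he, iff_false_intro h31, iff_true_intro ((hsymf j1 j2).mp hf12)]
              exact aux_tog_FT
            have := (aux_xor_congr (iff_true_intro hf12)
              (et.trans (iff_true_intro (he ▸ hfA : f j3 j2)))).mp hcontra
            exact aux_xor_self.mp this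
        have hgap1 : ∀ l : Fin n, j1.val < l.val → l.val < j2.val →
            ∀ c', ¬ F1C f j3 jA l c' :=
          fun l h1 h2 => aux_oblC_null hsymf j3 jA (hgap' l h1 h2)
        obtain ⟨l2, hval2, hadj2⟩ := aux_moveA
          (RS := fun i : Fin (m+4) => i.val ≠ m+1 ∧ i.val ≠ m+2) (r := r0)
          hfs1 ⟨show (m:ℕ) ≠ m+1 by omega, show (m:ℕ) ≠ m+2 by omega⟩ (fun x y hx hy => hpp1 x hx y hy)
          (fun x hx => ⟨⟨by have : (x.1:ℕ) < m := hx; omega,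
            by have : (x.1:ℕ) < m := hx; omega⟩, (hKRS x hx).2⟩)
          hlt hpar' hn12' hgap1
        refine aux_package_merge hm hk hP hPk ((u1, v1) :: l2) ⟨hedge1, hval2⟩
          (F2A (F1C f j3 jA) j1 j2) (fun x y hx hy => hadj2 x hx y hy) hX0 hZ0 hXZ0
          (aux_oblA_cov hcov1 j1 j2) (aux_oblA_const hconst1 j1 j2) ?_
          (aux_oblA_symm hsymf1 j1 j2)
        have hdisj1 : ∀ j : Fin n, (column (m+4) n j ⊆ X0 ∨ column (m+4) n j ⊆ Z0) →
            ((∀ l, F1C f j3 jA j l ↔ F1C f j3 jA j1 l) ∨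
             (∀ l, F1C f j3 jA j l ↔ F1C f j3 jA j2 l)) :=
          fun j hj => hj.imp (fun h l => hconst1 X0 hX0 j j1 h hsub1 l)
            (fun h l => hconst1 Z0 hZ0 j j2 h hsub2 l)
        have key := fun j hj l' => aux_keyA hsymf1 hd1' hd2' hn12' (hdisj1 j hj) l'
        exact fun j j' hj hj' l' => (key j hj l').trans (key j' hj' l').symm
    · -- no discriminator: the pair is mergeable, contradiction
      exfalso
      push_neg at hj3
      exact hC2 ⟨X0, hX0, Z0, hZ0, hXZ0, j1, j2, hsub1, hsub2, fun l' => hj3 l'⟩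
  · -- unrelated gap pair
    by_cases hpar : (j2.val - j1.val) % 2 = 1
    · -- odd distance: move A merges directly
      obtain ⟨l, hval, hadj⟩ := aux_moveA (RS := fun _ => True) (r := r0) hfs trivial
        (fun x y _ _ => hregH x y) hKRS hlt hpar hf12 hgap'
      refine aux_package_merge hm hk hP hPk l hval (F2A f j1 j2)
        (fun x y hx hy => hadj x hx y hy) hX0 hZ0 hXZ0
        (aux_oblA_cov hcovE j1 j2) (aux_oblA_const hconstE j1 j2) ?_
        (aux_oblA_symm hsymf j1 j2)
      have key := fun j hj l' => aux_keyA hsymf hd1 hd2 hf12 (hdisj j hj) l'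
      exact fun j j' hj hj' l' => (key j hj l').trans (key j' hj' l').symm
    · -- even distance: move B with discriminator j2
      have hpar' : (j2.val - j1.val) % 2 = 0 := by omega
      have hcond : ¬ (f j2 j1 ↔ f j2 j2) := fun hiff => hf12 (hfs _ _ (hiff.mpr hd2))
      obtain ⟨l, hval, hadj⟩ := aux_moveB (RS := fun _ => True) (r := r0) hfs trivial
        (fun x y _ _ => hregH x y) hKRS (v2r := (⟨m+1, by omega⟩ : Fin (m+4))) trivial
        (aux_fin_ne (show (m:ℕ)+1 ≠ m by omega))
        (fun x hx => aux_fin_ne (show (x.1:ℕ) ≠ m+1 by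
          have : (x.1:ℕ) < m := hx; omega))
        hlt hpar' hgap' hcond
      refine aux_package_merge hm hk hP hPk l hval (F2B f j1 j2 j2)
        (fun x y hx hy => hadj x hx y hy) hX0 hZ0 hXZ0
        (aux_oblB_cov hcovE j1 j2 j2) (aux_oblB_const hconstE j1 j2 j2) ?_
        (aux_oblB_symm hsymf j1 j2 j2)
      have key := fun j hj l' => aux_keyB1 hsymf hd1 hd2 hf12 (hdisj j hj) l'
      exact fun j j' hj hj' l' => (key j hj l').trans (key j' hj' l').symm
end
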